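/- arXiv:1811.10072 — 6 statements merged into one kernel-verified Lean document; each statement's English description precedes it below -/
import Mathlib

section
/- Consider the SGLD recursion for one-dimensional Bayesian linear regression started at θ⋆: θ_{k+1} = θ_k - γ(Σ(θ_k - θ⋆) + ρ(S_{k+1})(θ_k - θ⋆) + ξ(S_{k+1})) + √(2γ) Z_{k+1}, where Z_k are i.i.d. standard Gaussians and S_k are i.i.d. uniform subsamples with replacement of size p from {1,...,N}, independent of the Z's. Then for every k, E[θ_k] = θ⋆, and the variance satisfies the exact recursion E[(θ_{k+1} - θ⋆)²] = μ E[(θ_k - θ⋆)²] + 2γ + γ² A, where μ = E[(1 - γ(1/σ_p² + (N/(σ_y² p)) Σ_{i∈S} x_i²))²] and A = (N/p) Σ_{i=1}^N ((x_i θ⋆ - y_i) x_i / σ_y² + θ⋆/(N σ_p²))². -/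
open MeasureTheory ProbabilityTheory Real Filter

section GaussAux

lemma sgld_pdf (x : ℝ) :
    gaussianPDFReal 0 1 x = (Real.sqrt (2*π))⁻¹ * Real.exp (-(1/2) * x^2) := by
  simp only [gaussianPDFReal, NNReal.coe_one, mul_one, sub_zero]
  congr 1
  ring

lemma sgld_gauss_integral (g : ℝ → ℝ) :
    ∫ x, g x ∂(gaussianReal 0 1) = ∫ x, gaussianPDFReal 0 1 x * g x := by
  rw [gaussianReal_of_var_ne_zero _ one_ne_zero]
  have h : (gaussianPDF 0 1) = fun x => ((gaussianPDFReal 0 1 x).toNNReal : ENNReal) := rfl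
  rw [h, integral_withDensity_eq_integral_smul (measurable_gaussianPDFReal 0 1).real_toNNReal g]
  congr 1; funext x
  simp [NNReal.smul_def, Real.coe_toNNReal _ (gaussianPDFReal_nonneg 0 1 x)]

lemma sgld_gauss_integrable (g : ℝ → ℝ)
    (hg : Integrable (fun x => gaussianPDFReal 0 1 x * g x)) :
    Integrable g (gaussianReal 0 1) := by
  rw [gaussianReal_of_var_ne_zero _ one_ne_zero]
  have h : (gaussianPDF 0 1) = fun x => ((gaussianPDFReal 0 1 x).toNNReal : ENNReal) := rfl
  rw [h, integrable_withDensity_iff_integrable_smul (measurable_gaussianPDFReal 0 1).real_toNNReal]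
  refine hg.congr (Filter.Eventually.of_forall fun x => ?_)
  simp [NNReal.smul_def, Real.coe_toNNReal _ (gaussianPDFReal_nonneg 0 1 x)]

lemma sgld_int_exp : Integrable (fun x : ℝ => Real.exp (-(1/2) * x^2)) :=
  integrable_exp_neg_mul_sq one_half_pos

lemma sgld_int_sq : Integrable (fun x : ℝ => x^2 * Real.exp (-(1/2) * x^2)) := by
  have h := integrable_rpow_mul_exp_neg_mul_sq (b := 1/2) one_half_pos (s := 2) (by norm_num)
  refine h.congr (Filter.Eventually.of_forall fun x => ?_)
  beta_reduce
  rw [← Real.rpow_natCast x 2]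
  norm_num

lemma sgld_val_exp : ∫ x : ℝ, Real.exp (-(1/2) * x^2) = Real.sqrt (2*π) := by
  rw [integral_gaussian]
  congr 1
  ring

lemma sgld_deriv_zero {f f' : ℝ → ℝ} (hderiv : ∀ x, HasDerivAt f (f' x) x)
    (hint : Integrable f') (htop : Tendsto f atTop (nhds 0))
    (hbot : Tendsto f atBot (nhds 0)) : ∫ x, f' x = 0 := by
  rw [← intervalIntegral.integral_Iic_add_Ioi (b := (0:ℝ)) hint.integrableOn hint.integrableOn,
    integral_Ioi_of_hasDerivAt_of_tendsto' (fun x _ => hderiv x) hint.integrableOn htop,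
    integral_Iic_of_hasDerivAt_of_tendsto' (fun x _ => hderiv x) hint.integrableOn hbot]
  ring

lemma sgld_tendsto_exp_top : Tendsto (fun x:ℝ => Real.exp (-(1/2)*x^2)) atTop (nhds 0) := by
  have hsq : Tendsto (fun x:ℝ => x^2) atTop atTop := tendsto_pow_atTop (by norm_num)
  have h1 : Tendsto (fun x:ℝ => (1/2)*x^2) atTop atTop :=
    (tendsto_const_mul_atTop_of_pos one_half_pos).mpr hsq
  have h2 := Real.tendsto_exp_atBot.comp (tendsto_neg_atTop_atBot.comp h1)
  refine h2.congr fun x => ?_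
  simp [Function.comp_def, neg_mul]

lemma sgld_tendsto_exp_bot : Tendsto (fun x:ℝ => Real.exp (-(1/2)*x^2)) atBot (nhds 0) := by
  have hsq : Tendsto (fun x:ℝ => x^2) atBot atTop := by
    have h := (tendsto_pow_atTop (n := 2) (by norm_num)).comp (tendsto_neg_atBot_atTop (G := ℝ))
    exact h.congr fun x => by simp [Function.comp_def, neg_sq]
  have h1 : Tendsto (fun x:ℝ => (1/2)*x^2) atBot atTop :=
    (tendsto_const_mul_atTop_of_pos one_half_pos).mpr hsq
  have h2 := Real.tendsto_exp_atBot.comp (tendsto_neg_atTop_atBot.comp h1)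
  refine h2.congr fun x => ?_
  simp [Function.comp_def, neg_mul]

lemma sgld_val_id : ∫ x : ℝ, x * Real.exp (-(1/2) * x^2) = 0 := by
  apply sgld_deriv_zero (f := fun x => -Real.exp (-(1/2)*x^2))
  · intro x
    have h1 := HasDerivAt.const_mul (-(1/2) : ℝ) (hasDerivAt_pow 2 x)
    have h2 := h1.exp.neg
    exact h2.congr_deriv (by norm_num; ring)
  · exact integrable_mul_exp_neg_mul_sq one_half_pos
  · simpa using sgld_tendsto_exp_top.neg
  · simpa using sgld_tendsto_exp_bot.neg

lemma sgld_tendsto_id_mul_exp_top :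
    Tendsto (fun x:ℝ => x * Real.exp (-(1/2)*x^2)) atTop (nhds 0) := by
  have h := rpow_mul_exp_neg_mul_sq_isLittleO_exp_neg one_half_pos 1
  have h0 : Tendsto (fun x:ℝ => Real.exp (-(1/2)*x)) atTop (nhds 0) := by
    have h1 : Tendsto (fun x:ℝ => (1/2)*x) atTop atTop :=
      (tendsto_const_mul_atTop_of_pos one_half_pos).mpr tendsto_id
    have h2 := Real.tendsto_exp_atBot.comp (tendsto_neg_atTop_atBot.comp h1)
    exact h2.congr fun x => by simp [Function.comp_def, neg_mul]
  have h2 := h.isBigO.trans_tendsto h0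
  exact h2.congr fun x => by rw [Real.rpow_one]

lemma sgld_tendsto_id_mul_exp_bot :
    Tendsto (fun x:ℝ => x * Real.exp (-(1/2)*x^2)) atBot (nhds 0) := by
  have h1 : Tendsto (fun x:ℝ => -x * Real.exp (-(1/2)*(-x)^2)) atTop (nhds 0) := by
    have := sgld_tendsto_id_mul_exp_top.neg
    refine (by simpa using this : Tendsto (fun x:ℝ => -(x * Real.exp (-(1/2)*x^2))) atTop (nhds 0)).congr fun x => ?_
    simp [neg_sq]
  have h2 := h1.comp tendsto_neg_atBot_atTop
  refine h2.congr fun x => ?_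
  simp [Function.comp_def, neg_sq]

lemma sgld_val_sq : ∫ x : ℝ, x^2 * Real.exp (-(1/2) * x^2) = Real.sqrt (2*π) := by
  have key : ∫ x : ℝ, (Real.exp (-(1/2)*x^2) - x^2 * Real.exp (-(1/2)*x^2)) = 0 := by
    apply sgld_deriv_zero (f := fun x => x * Real.exp (-(1/2)*x^2))
    · intro x
      have h1 := HasDerivAt.const_mul (-(1/2) : ℝ) (hasDerivAt_pow 2 x)
      have h2 := (hasDerivAt_id x).mul h1.exp
      exact h2.congr_deriv (by norm_num [id_eq]; ring)
    · exact sgld_int_exp.sub sgld_int_sq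
    · exact sgld_tendsto_id_mul_exp_top
    · exact sgld_tendsto_id_mul_exp_bot
  rw [integral_sub sgld_int_exp sgld_int_sq, sgld_val_exp] at key
  linarith

lemma sgld_gauss_mean : ∫ x, x ∂(gaussianReal 0 1) = 0 := by
  rw [sgld_gauss_integral]
  have h : ∀ x:ℝ, gaussianPDFReal 0 1 x * x
      = (Real.sqrt (2*π))⁻¹ * (x * Real.exp (-(1/2)*x^2)) := fun x => by rw [sgld_pdf]; ring
  simp_rw [h]
  rw [integral_const_mul, sgld_val_id, mul_zero]

lemma sgld_gauss_sq : ∫ x, x^2 ∂(gaussianReal 0 1) = 1 := by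
  rw [sgld_gauss_integral]
  have h : ∀ x:ℝ, gaussianPDFReal 0 1 x * x^2
      = (Real.sqrt (2*π))⁻¹ * (x^2 * Real.exp (-(1/2)*x^2)) := fun x => by rw [sgld_pdf]; ring
  simp_rw [h]
  rw [integral_const_mul, sgld_val_sq]
  exact inv_mul_cancel₀ (Real.sqrt_ne_zero'.mpr (by positivity))

lemma sgld_gauss_int_id : Integrable (fun x : ℝ => x) (gaussianReal 0 1) := by
  apply sgld_gauss_integrable
  have h : ∀ x:ℝ, gaussianPDFReal 0 1 x * x
      = (Real.sqrt (2*π))⁻¹ * (x * Real.exp (-(1/2)*x^2)) := fun x => by rw [sgld_pdf]; ring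
  simp_rw [h]
  exact (integrable_mul_exp_neg_mul_sq one_half_pos).const_mul _

lemma sgld_gauss_int_sq : Integrable (fun x : ℝ => x^2) (gaussianReal 0 1) := by
  apply sgld_gauss_integrable
  have h : ∀ x:ℝ, gaussianPDFReal 0 1 x * x^2
      = (Real.sqrt (2*π))⁻¹ * (x^2 * Real.exp (-(1/2)*x^2)) := fun x => by rw [sgld_pdf]; ring
  simp_rw [h]
  exact sgld_int_sq.const_mul _

end GaussAux

section CombAux

lemma sgld_comb_cons {M q : ℕ} (f : Fin M → ℝ) (a : Fin M) (t : Fin q → Fin M) :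
    ∑ j : Fin (q+1), f ((Fin.consEquiv (fun _ => Fin M)) (a, t) j)
      = f a + ∑ j : Fin q, f (t j) := by
  rw [Fin.sum_univ_succ]
  simp [Fin.consEquiv]

lemma sgld_comb1 {M : ℕ} (f : Fin M → ℝ) (hf : ∑ i, f i = 0) (q : ℕ) :
    ∑ s : Fin q → Fin M, ∑ j, f (s j) = 0 := by
  induction q with
  | zero => simp
  | succ q ih =>
    rw [← (Fin.consEquiv (fun _ : Fin (q+1) => Fin M)).sum_comp (fun s => ∑ j, f (s j)),
      Fintype.sum_prod_type]
    simp_rw [sgld_comb_cons f]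
    simp only [Finset.sum_add_distrib, ih, add_zero, Finset.sum_const, Finset.card_univ,
      nsmul_eq_mul]
    rw [← Finset.mul_sum, hf, mul_zero]

lemma sgld_comb2 {M : ℕ} (f : Fin M → ℝ) (hf : ∑ i, f i = 0) (q : ℕ) :
    ∑ s : Fin q → Fin M, (∑ j, f (s j))^2 = q * (M:ℝ)^(q-1) * ∑ i, f i^2 := by
  induction q with
  | zero => simp
  | succ q ih =>
    rw [← (Fin.consEquiv (fun _ : Fin (q+1) => Fin M)).sum_comp (fun s => (∑ j, f (s j))^2),
      Fintype.sum_prod_type]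
    simp_rw [sgld_comb_cons f, add_sq]
    have h1 : ∀ a : Fin M, ∑ t : Fin q → Fin M,
        (f a ^2 + 2 * f a * (∑ j, f (t j)) + (∑ j, f (t j))^2)
        = (Fintype.card (Fin q → Fin M) : ℝ) * f a^2 + (q * (M:ℝ)^(q-1) * ∑ i, f i^2) := by
      intro a
      rw [Finset.sum_add_distrib, Finset.sum_add_distrib, Finset.sum_const, ← Finset.mul_sum,
        sgld_comb1 f hf q, ih]
      simp [Finset.card_univ, nsmul_eq_mul]
    simp_rw [h1]
    rw [Finset.sum_add_distrib, Finset.sum_const, ← Finset.mul_sum, Finset.card_univ]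
    have hcard : (Fintype.card (Fin q → Fin M) : ℝ) = (M:ℝ)^q := by
      rw [Fintype.card_fun]; simp
    rw [hcard]
    rcases q with _ | q
    · simp
    · rw [Nat.add_sub_cancel, Nat.add_sub_cancel]
      simp only [Fintype.card_fin]
      push_cast
      ring

end CombAux

lemma sgld_pow_aux {n : ℕ} (hn : 0 < n) (r : ℝ) : r^(n-1) * r = r^n := by
  cases n with
  | zero => exact absurd hn (lt_irrefl 0)
  | succ q => rw [Nat.succ_sub_one, ← pow_succ]

/-- Exact mean and variance recursion for SGLD in one-dimensional Bayesian linear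
regression, started at the posterior mode `θ⋆`. -/
theorem stmt3 {Ω : Type*} [MeasurableSpace Ω] {μ : Measure Ω} [IsProbabilityMeasure μ]
    (N p : ℕ) (hN : 0 < N) (hp : 0 < p)
    (x y : Fin N → ℝ) (σy2 σp2 γ : ℝ) (hσy : 0 < σy2) (hσp : 0 < σp2) (hγ : 0 < γ)
    (Sig θs : ℝ)
    (hSig : Sig = 1 / σp2 + ∑ i, x i ^ 2 / σy2)
    (hθs : θs = Sig⁻¹ * (∑ i, x i * y i) / σy2)
    (θ : ℕ → Ω → ℝ) (S : ℕ → Ω → (Fin p → Fin N)) (Z : ℕ → Ω → ℝ)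
    (hmeasθ : ∀ k, Measurable (θ k)) (hmeasS : ∀ k, Measurable (S k))
    (hmeasZ : ∀ k, Measurable (Z k))
    (hθ0 : ∀ ω, θ 0 ω = θs)
    -- `Z_k` are standard Gaussians
    (hZlaw : ∀ k, μ.map (Z k) = gaussianReal 0 1)
    -- `S_k` are uniform subsamples with replacement of size `p` of `{1,…,N}`
    (hSlaw : ∀ k (f : (Fin p → Fin N) → ℝ),
      ∫ ω, f (S k ω) ∂μ = (∑ s : Fin p → Fin N, f s) / (Fintype.card (Fin p → Fin N)))
    -- independence: `(S_{k+1}, Z_{k+1})` is independent of `θ_k`, and `S_{k+1} ⟂ Z_{k+1}`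
    (hindep1 : ∀ k, IndepFun (θ k) (fun ω => (S (k + 1) ω, Z (k + 1) ω)) μ)
    (hindep2 : ∀ k, IndepFun (S (k + 1)) (Z (k + 1)) μ)
    (hL2 : ∀ k, MemLp (θ k) 2 μ)
    -- the SGLD recursion `θ_{k+1} = θ_k - γ(Σ(θ_k-θ⋆) + ρ(S_{k+1})(θ_k-θ⋆) + ξ(S_{k+1})) + √(2γ) Z_{k+1}`
    (hrec : ∀ k ω, θ (k + 1) ω = θ k ω
      - γ * (Sig * (θ k ω - θs)
        + (1 / σp2 + ((N : ℝ) / ((p : ℝ) * σy2)) * (∑ j : Fin p, x (S (k + 1) ω j) ^ 2) - Sig)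
            * (θ k ω - θs)
        + (θs / σp2 + ((N : ℝ) / ((p : ℝ) * σy2))
            * ∑ j : Fin p, (x (S (k + 1) ω j) * θs - y (S (k + 1) ω j)) * x (S (k + 1) ω j)))
      + Real.sqrt (2 * γ) * Z (k + 1) ω) :
    (∀ k, ∫ ω, θ k ω ∂μ = θs) ∧
    (∀ k, ∫ ω, (θ (k + 1) ω - θs) ^ 2 ∂μ
      = ((∑ s : Fin p → Fin N,
            (1 - γ * (1 / σp2 + ((N : ℝ) / (σy2 * (p : ℝ))) * ∑ j : Fin p, x (s j) ^ 2)) ^ 2)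
            / (Fintype.card (Fin p → Fin N)))
          * ∫ ω, (θ k ω - θs) ^ 2 ∂μ
        + 2 * γ
        + γ ^ 2 * (((N : ℝ) / (p : ℝ))
            * ∑ i, ((x i * θs - y i) * x i / σy2 + θs / ((N : ℝ) * σp2)) ^ 2)) := by
  have hNR : (0:ℝ) < (N:ℝ) := by exact_mod_cast hN
  have hpR : (0:ℝ) < (p:ℝ) := by exact_mod_cast hp
  have hSigpos : 0 < Sig := by
    rw [hSig]
    have : (0:ℝ) ≤ ∑ i, x i ^ 2 / σy2 :=
      Finset.sum_nonneg fun i _ => div_nonneg (sq_nonneg _) hσy.le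
    have h1 : (0:ℝ) < 1 / σp2 := by positivity
    linarith
  have hθsSig : Sig * θs = (∑ i, x i * y i) / σy2 := by
    rw [hθs]
    field_simp
  -- the centered per-data-point function
  set cF : Fin N → ℝ := fun i => (x i * θs - y i) * x i / σy2 + θs / ((N:ℝ) * σp2) with hcF
  have hcsum : ∑ i, cF i = 0 := by
    have hexp : ∀ i : Fin N, cF i
        = (x i ^ 2 / σy2) * θs - (x i * y i) / σy2 + θs / ((N:ℝ) * σp2) := fun i => by
      rw [hcF]; ring
    simp_rw [hexp]
    rw [Finset.sum_add_distrib, Finset.sum_sub_distrib, ← Finset.sum_mul, ← Finset.sum_div,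
      ← Finset.sum_div, Finset.sum_const, Finset.card_univ, Fintype.card_fin, nsmul_eq_mul]
    have h1 : (N:ℝ) * (θs / ((N:ℝ) * σp2)) = θs / σp2 := by
      field_simp
    have h2 : ((∑ i, x i ^ 2) / σy2) = Sig - 1 / σp2 := by
      rw [hSig, Finset.sum_div]
      ring
    rw [h1, ← hθsSig, h2]
    ring
  set aF : (Fin p → Fin N) → ℝ :=
    fun s => 1 - γ * (1 / σp2 + ((N : ℝ) / (σy2 * (p : ℝ))) * ∑ j : Fin p, x (s j) ^ 2) with haF
  set ξF : (Fin p → Fin N) → ℝ :=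
    fun s => θs / σp2 + ((N : ℝ) / ((p : ℝ) * σy2))
      * ∑ j : Fin p, (x (s j) * θs - y (s j)) * x (s j) with hξF
  have hξc : ∀ s : Fin p → Fin N, ξF s = ((N:ℝ)/(p:ℝ)) * ∑ j : Fin p, cF (s j) := by
    intro s
    simp only [hξF, hcF]
    rw [Finset.sum_add_distrib, Finset.sum_const, Finset.card_univ, Fintype.card_fin,
      nsmul_eq_mul, ← Finset.sum_div]
    field_simp
    ring
  have hξsum : ∑ s : Fin p → Fin N, ξF s = 0 := by
    simp only [hξc]
    rw [← Finset.mul_sum, sgld_comb1 cF hcsum p, mul_zero]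
  -- integrability of functions of the subsample
  have hSbd : ∀ (k : ℕ) (f : (Fin p → Fin N) → ℝ), Integrable (fun ω => f (S k ω)) μ := by
    intro k f
    refine Integrable.mono' (integrable_const (∑ s : Fin p → Fin N, |f s|))
      ((measurable_of_countable f).comp (hmeasS k)).aestronglyMeasurable
      (Filter.Eventually.of_forall fun ω => ?_)
    rw [Real.norm_eq_abs]
    exact Finset.single_le_sum (fun s _ => abs_nonneg (f s)) (Finset.mem_univ _)
  -- facts about the Gaussian noise
  have hZint : ∀ j, Integrable (Z j) μ := by
    intro j
    have h := sgld_gauss_int_id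
    rw [← hZlaw j] at h
    exact (integrable_map_measure aestronglyMeasurable_id (hmeasZ j).aemeasurable).mp h
  have hZsq_int : ∀ j, Integrable (fun ω => (Z j ω)^2) μ := by
    intro j
    have h := sgld_gauss_int_sq
    rw [← hZlaw j] at h
    exact (integrable_map_measure (measurable_id.pow_const 2).aestronglyMeasurable
      (hmeasZ j).aemeasurable).mp h
  have hZmean : ∀ j, ∫ ω, Z j ω ∂μ = 0 := by
    intro j
    have h := integral_map (μ := μ) (hmeasZ j).aemeasurable
      (f := fun t : ℝ => t) aestronglyMeasurable_id
    rw [hZlaw j] at h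
    calc ∫ ω, Z j ω ∂μ = ∫ t, t ∂(gaussianReal 0 1) := h.symm
      _ = 0 := sgld_gauss_mean
  have hZsq_val : ∀ j, ∫ ω, (Z j ω)^2 ∂μ = 1 := by
    intro j
    have h := integral_map (μ := μ) (hmeasZ j).aemeasurable
      (f := fun t : ℝ => t^2) (measurable_id.pow_const 2).aestronglyMeasurable
    rw [hZlaw j] at h
    calc ∫ ω, (Z j ω)^2 ∂μ = ∫ t, t^2 ∂(gaussianReal 0 1) := h.symm
      _ = 1 := sgld_gauss_sq
  -- the mean recursion
  have hmean : ∀ k, ∫ ω, θ k ω ∂μ = θs := by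
    intro k
    induction k with
    | zero =>
      simp only [hθ0]
      simp
    | succ k ih =>
      have hθki : Integrable (θ k) μ := (hL2 k).integrable (by norm_num)
      have hΔint : Integrable (fun ω => θ k ω - θs) μ := hθki.sub (integrable_const θs)
      have hΔmean : ∫ ω, (θ k ω - θs) ∂μ = 0 := by
        rw [integral_sub hθki (integrable_const θs), ih, integral_const]
        simp
      have hIa : IndepFun (fun ω => θ k ω - θs) (fun ω => aF (S (k+1) ω)) μ :=
        (hindep1 k).comp (measurable_id.sub_const θs)
          ((measurable_of_countable aF).comp measurable_fst)
      have hkeym : ∀ ω, θ (k+1) ω = θs + ((θ k ω - θs) * aF (S (k+1) ω)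
          + (Real.sqrt (2*γ) * Z (k+1) ω - γ * ξF (S (k+1) ω))) := by
        intro ω
        rw [hrec k ω]
        simp only [haF, hξF]
        ring
      have hIab : Integrable (fun ω => (θ k ω - θs) * aF (S (k+1) ω)) μ :=
        hIa.integrable_mul hΔint (hSbd (k+1) aF)
      have hIz : Integrable
          (fun ω => Real.sqrt (2*γ) * Z (k+1) ω - γ * ξF (S (k+1) ω)) μ :=
        ((hZint (k+1)).const_mul _).sub ((hSbd (k+1) ξF).const_mul _)
      have hprod : ∫ ω, (θ k ω - θs) * aF (S (k+1) ω) ∂μ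
          = (∫ ω, (θ k ω - θs) ∂μ) * ∫ ω, aF (S (k+1) ω) ∂μ :=
        hIa.integral_fun_mul_eq_mul_integral hΔint.aestronglyMeasurable (hSbd (k+1) aF).aestronglyMeasurable
      have hξ0 : ∫ ω, ξF (S (k+1) ω) ∂μ = 0 := by
        rw [hSlaw (k+1) ξF, hξsum, zero_div]
      have hsum1 : Integrable (fun ω => (θ k ω - θs) * aF (S (k+1) ω)
          + (Real.sqrt (2*γ) * Z (k+1) ω - γ * ξF (S (k+1) ω))) μ := hIab.add hIz
      calc ∫ ω, θ (k+1) ω ∂μ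
          = ∫ ω, (θs + ((θ k ω - θs) * aF (S (k+1) ω)
              + (Real.sqrt (2*γ) * Z (k+1) ω - γ * ξF (S (k+1) ω)))) ∂μ := by
            simp only [hkeym]
        _ = θs := by
            rw [integral_add (integrable_const θs) hsum1, integral_add hIab hIz,
              integral_sub ((hZint (k+1)).const_mul _) ((hSbd (k+1) ξF).const_mul _),
              integral_const_mul, integral_const_mul, hprod, hΔmean, hZmean (k+1), hξ0,
              integral_const]
            simp
  refine ⟨hmean, fun k => ?_⟩
  -- variance recursion
  have hθki : Integrable (θ k) μ := (hL2 k).integrable (by norm_num)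
  have hΔint : Integrable (fun ω => θ k ω - θs) μ := hθki.sub (integrable_const θs)
  have hΔ0 : ∫ ω, (θ k ω - θs) ∂μ = 0 := by
    rw [integral_sub hθki (integrable_const θs), hmean k, integral_const]
    simp
  have hΔL2 : MemLp (fun ω => θ k ω - θs) 2 μ := (hL2 k).sub (memLp_const θs)
  have hΔsqi : Integrable (fun ω => (θ k ω - θs)^2) μ :=
    (memLp_two_iff_integrable_sq hΔL2.aestronglyMeasurable).mp hΔL2
  have hkey : ∀ ω, θ (k+1) ω - θs = (θ k ω - θs) * aF (S (k+1) ω)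
      + (Real.sqrt (2*γ) * Z (k+1) ω - γ * ξF (S (k+1) ω)) := by
    intro ω
    rw [hrec k ω]
    simp only [haF, hξF]
    ring
  have hsq2γ : Real.sqrt (2*γ) ^ 2 = 2*γ := Real.sq_sqrt (by positivity)
  have hfun : (fun ω => (θ (k+1) ω - θs)^2) = (fun ω =>
      (θ k ω - θs)^2 * (aF (S (k+1) ω))^2
      + ((2*Real.sqrt (2*γ)) * ((θ k ω - θs) * (aF (S (k+1) ω) * Z (k+1) ω))
      + ((-(2*γ)) * ((θ k ω - θs) * (aF (S (k+1) ω) * ξF (S (k+1) ω)))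
      + ((2*γ) * (Z (k+1) ω)^2
      + ((-(2*γ*Real.sqrt (2*γ))) * (ξF (S (k+1) ω) * Z (k+1) ω)
      + γ^2 * (ξF (S (k+1) ω))^2))))) := by
    funext ω
    rw [hkey ω]
    linear_combination (Z (k+1) ω)^2 * hsq2γ
  have hI1 : IndepFun (fun ω => (θ k ω - θs)^2) (fun ω => (aF (S (k+1) ω))^2) μ :=
    (hindep1 k).comp ((measurable_id.sub_const θs).pow_const 2)
      ((measurable_of_countable (fun s => (aF s)^2)).comp measurable_fst)
  have hI2 : IndepFun (fun ω => θ k ω - θs) (fun ω => aF (S (k+1) ω) * Z (k+1) ω) μ :=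
    (hindep1 k).comp (measurable_id.sub_const θs)
      (((measurable_of_countable aF).comp measurable_fst).mul measurable_snd)
  have hI3 : IndepFun (fun ω => θ k ω - θs)
      (fun ω => aF (S (k+1) ω) * ξF (S (k+1) ω)) μ :=
    (hindep1 k).comp (measurable_id.sub_const θs)
      ((measurable_of_countable (fun s => aF s * ξF s)).comp measurable_fst)
  have hI5 : IndepFun (fun ω => ξF (S (k+1) ω)) (Z (k+1)) μ :=
    (hindep2 k).comp (measurable_of_countable ξF) measurable_id
  have hiA2 : Integrable (fun ω => (aF (S (k+1) ω))^2) μ := hSbd (k+1) (fun s => (aF s)^2)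
  have hT1 : Integrable (fun ω => (θ k ω - θs)^2 * (aF (S (k+1) ω))^2) μ :=
    hI1.integrable_mul hΔsqi hiA2
  have hiAZ : Integrable (fun ω => aF (S (k+1) ω) * Z (k+1) ω) μ := by
    refine (hZint (k+1)).bdd_mul
      ((measurable_of_countable aF).comp (hmeasS (k+1))).aestronglyMeasurable
      (c := ∑ s : Fin p → Fin N, |aF s|) (Filter.Eventually.of_forall fun ω => ?_)
    rw [Real.norm_eq_abs]
    exact Finset.single_le_sum (f := fun s => |aF s|) (fun s _ => abs_nonneg _)
      (Finset.mem_univ _)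
  have hT2 : Integrable (fun ω => (θ k ω - θs) * (aF (S (k+1) ω) * Z (k+1) ω)) μ :=
    hI2.integrable_mul hΔint hiAZ
  have hT3 : Integrable (fun ω => (θ k ω - θs) * (aF (S (k+1) ω) * ξF (S (k+1) ω))) μ :=
    hI3.integrable_mul hΔint (hSbd (k+1) (fun s => aF s * ξF s))
  have hT5 : Integrable (fun ω => ξF (S (k+1) ω) * Z (k+1) ω) μ := by
    refine (hZint (k+1)).bdd_mul
      ((measurable_of_countable ξF).comp (hmeasS (k+1))).aestronglyMeasurable
      (c := ∑ s : Fin p → Fin N, |ξF s|) (Filter.Eventually.of_forall fun ω => ?_)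
    rw [Real.norm_eq_abs]
    exact Finset.single_le_sum (f := fun s => |ξF s|) (fun s _ => abs_nonneg _)
      (Finset.mem_univ _)
  have hT6 : Integrable (fun ω => (ξF (S (k+1) ω))^2) μ := hSbd (k+1) (fun s => (ξF s)^2)
  -- values
  have hv1 : ∫ ω, (θ k ω - θs)^2 * (aF (S (k+1) ω))^2 ∂μ
      = (∫ ω, (θ k ω - θs)^2 ∂μ) * ∫ ω, (aF (S (k+1) ω))^2 ∂μ :=
    hI1.integral_fun_mul_eq_mul_integral hΔsqi.aestronglyMeasurable hiA2.aestronglyMeasurable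
  have hv2 : ∫ ω, (θ k ω - θs) * (aF (S (k+1) ω) * Z (k+1) ω) ∂μ = 0 := by
    have h : ∫ ω, (θ k ω - θs) * (aF (S (k+1) ω) * Z (k+1) ω) ∂μ
        = (∫ ω, (θ k ω - θs) ∂μ) * ∫ ω, aF (S (k+1) ω) * Z (k+1) ω ∂μ :=
      hI2.integral_fun_mul_eq_mul_integral hΔint.aestronglyMeasurable hiAZ.aestronglyMeasurable
    rw [hΔ0, zero_mul] at h
    exact h
  have hv3 : ∫ ω, (θ k ω - θs) * (aF (S (k+1) ω) * ξF (S (k+1) ω)) ∂μ = 0 := by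
    have h : ∫ ω, (θ k ω - θs) * (aF (S (k+1) ω) * ξF (S (k+1) ω)) ∂μ
        = (∫ ω, (θ k ω - θs) ∂μ) * ∫ ω, aF (S (k+1) ω) * ξF (S (k+1) ω) ∂μ :=
      hI3.integral_fun_mul_eq_mul_integral hΔint.aestronglyMeasurable (hSbd (k+1) (fun s => aF s * ξF s)).aestronglyMeasurable
    rw [hΔ0, zero_mul] at h
    exact h
  have hv5 : ∫ ω, ξF (S (k+1) ω) * Z (k+1) ω ∂μ = 0 := by
    have h : ∫ ω, ξF (S (k+1) ω) * Z (k+1) ω ∂μ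
        = (∫ ω, ξF (S (k+1) ω) ∂μ) * ∫ ω, Z (k+1) ω ∂μ :=
      hI5.integral_fun_mul_eq_mul_integral (hSbd (k+1) ξF).aestronglyMeasurable (hZint (k+1)).aestronglyMeasurable
    rw [hZmean (k+1), mul_zero] at h
    exact h
  have hvC : ∫ ω, (aF (S (k+1) ω))^2 ∂μ
      = (∑ s : Fin p → Fin N,
            (1 - γ * (1 / σp2 + ((N : ℝ) / (σy2 * (p : ℝ))) * ∑ j : Fin p, x (s j) ^ 2)) ^ 2)
          / (Fintype.card (Fin p → Fin N)) := by
    have h := hSlaw (k+1) (fun s => (aF s)^2)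
    simpa [haF] using h
  have hcard : (Fintype.card (Fin p → Fin N) : ℝ) = (N:ℝ)^p := by
    rw [Fintype.card_fun, Fintype.card_fin, Fintype.card_fin]
    push_cast
    ring
  have hv6 : ∫ ω, (ξF (S (k+1) ω))^2 ∂μ
      = ((N : ℝ) / (p : ℝ))
          * ∑ i, ((x i * θs - y i) * x i / σy2 + θs / ((N : ℝ) * σp2)) ^ 2 := by
    have h6 : ∫ ω, (ξF (S (k+1) ω))^2 ∂μ
        = (∑ s : Fin p → Fin N, (ξF s)^2) / (Fintype.card (Fin p → Fin N)) := by
      simpa using hSlaw (k+1) (fun s => (ξF s)^2)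
    have hsum : ∑ s : Fin p → Fin N, (ξF s)^2
        = ((N:ℝ)/(p:ℝ))^2 * ((p:ℝ) * (N:ℝ)^(p-1) * ∑ i, cF i ^2) := by
      simp only [hξc, mul_pow]
      rw [← Finset.mul_sum, sgld_comb2 cF hcsum p]
    have hpow := sgld_pow_aux hp (N:ℝ)
    have hfrac : (((N:ℝ)/(p:ℝ))^2 * ((p:ℝ) * (N:ℝ)^(p-1) * ∑ i, cF i ^2)) / ((N:ℝ)^p)
        = ((N:ℝ)/(p:ℝ)) * ∑ i, cF i ^2 := by
      rw [← hpow]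
      have hNe : (N:ℝ)^(p-1) ≠ 0 := pow_ne_zero _ hNR.ne'
      field_simp
    rw [h6, hcard, hsum, hfrac]
  have hc2 : Integrable (fun ω => (2*Real.sqrt (2*γ))
      * ((θ k ω - θs) * (aF (S (k+1) ω) * Z (k+1) ω))) μ := hT2.const_mul _
  have hc3 : Integrable (fun ω => (-(2*γ))
      * ((θ k ω - θs) * (aF (S (k+1) ω) * ξF (S (k+1) ω)))) μ := hT3.const_mul _
  have hc4 : Integrable (fun ω => (2*γ) * (Z (k+1) ω)^2) μ := (hZsq_int (k+1)).const_mul _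
  have hc5 : Integrable (fun ω => (-(2*γ*Real.sqrt (2*γ)))
      * (ξF (S (k+1) ω) * Z (k+1) ω)) μ := hT5.const_mul _
  have hc6 : Integrable (fun ω => γ^2 * (ξF (S (k+1) ω))^2) μ := hT6.const_mul _
  have hR5 : Integrable (fun ω => (-(2*γ*Real.sqrt (2*γ))) * (ξF (S (k+1) ω) * Z (k+1) ω)
      + γ^2 * (ξF (S (k+1) ω))^2) μ := hc5.add hc6
  have hR4 : Integrable (fun ω => (2*γ) * (Z (k+1) ω)^2
      + ((-(2*γ*Real.sqrt (2*γ))) * (ξF (S (k+1) ω) * Z (k+1) ω)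
      + γ^2 * (ξF (S (k+1) ω))^2)) μ := hc4.add hR5
  have hR3 : Integrable (fun ω => (-(2*γ)) * ((θ k ω - θs) * (aF (S (k+1) ω) * ξF (S (k+1) ω)))
      + ((2*γ) * (Z (k+1) ω)^2
      + ((-(2*γ*Real.sqrt (2*γ))) * (ξF (S (k+1) ω) * Z (k+1) ω)
      + γ^2 * (ξF (S (k+1) ω))^2))) μ := hc3.add hR4
  have hR2 : Integrable (fun ω => (2*Real.sqrt (2*γ))
      * ((θ k ω - θs) * (aF (S (k+1) ω) * Z (k+1) ω))
      + ((-(2*γ)) * ((θ k ω - θs) * (aF (S (k+1) ω) * ξF (S (k+1) ω)))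
      + ((2*γ) * (Z (k+1) ω)^2
      + ((-(2*γ*Real.sqrt (2*γ))) * (ξF (S (k+1) ω) * Z (k+1) ω)
      + γ^2 * (ξF (S (k+1) ω))^2)))) μ := hc2.add hR3
  rw [hfun, integral_add hT1 hR2, integral_add hc2 hR3, integral_add hc3 hR4,
    integral_add hc4 hR5, integral_add hc5 hc6,
    integral_const_mul, integral_const_mul, integral_const_mul, integral_const_mul,
    integral_const_mul, hv1, hv2, hv3, hv5, hvC, hv6, hZsq_val (k+1)]
  ring
end

section
/- Let λ and ν be probability measures on ℝ with finite second moments, equal means, and variances v_λ, v_ν. Then W₂(λ, ν) ≥ |√v_λ - √v_ν|. -/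
open MeasureTheory

/-- The Wasserstein distance of order 2 between two probability measures on `ℝ`,
defined as the infimum over couplings of the `L²` transport cost. -/
noncomputable def W2 (lam nu : Measure ℝ) : ℝ :=
  sInf { r : ℝ | ∃ ξ : Measure (ℝ × ℝ), IsProbabilityMeasure ξ ∧
    ξ.map Prod.fst = lam ∧ ξ.map Prod.snd = nu ∧
    r = (∫ q, (q.1 - q.2) ^ 2 ∂ξ) ^ ((1 : ℝ) / 2) }

lemma norm_toLp_two {α : Type*} [MeasurableSpace α] {μ : Measure α} {f : α → ℝ}
    (hf : MemLp f 2 μ) : ‖hf.toLp f‖ = Real.sqrt (∫ a, (f a) ^ 2 ∂μ) := by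
  rw [Lp.norm_toLp, hf.eLpNorm_eq_integral_rpow_norm two_ne_zero ENNReal.ofNat_ne_top,
    ENNReal.toReal_ofReal (by positivity)]
  have h2 : ((2 : ENNReal)).toReal = ((2 : ℕ) : ℝ) := by simp
  rw [h2]
  simp_rw [Real.rpow_natCast, Real.norm_eq_abs, sq_abs]
  rw [Real.sqrt_eq_rpow, one_div]
  norm_num

/-- Gelbrich's lower bound in dimension one: for probability measures with finite second
moments and equal means, `W₂(λ, ν) ≥ |√v_λ - √v_ν|`. -/
theorem stmt6 (lam nu : Measure ℝ) [IsProbabilityMeasure lam] [IsProbabilityMeasure nu]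
    (hl2 : MemLp id 2 lam) (hn2 : MemLp id 2 nu)
    (mean : ℝ) (hlmean : ∫ t, t ∂lam = mean) (hnmean : ∫ t, t ∂nu = mean)
    (vl vn : ℝ) (hvl : vl = ∫ t, (t - mean) ^ 2 ∂lam) (hvn : vn = ∫ t, (t - mean) ^ 2 ∂nu) :
    |Real.sqrt vl - Real.sqrt vn| ≤ W2 lam nu := by
  apply le_csInf
  · refine ⟨_, lam.prod nu, inferInstance, ?_, ?_, rfl⟩
    · simp [Measure.map_fst_prod]
    · simp [Measure.map_snd_prod]
  · rintro r ⟨ξ, hξ, hfst, hsnd, rfl⟩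
    -- marginal moments
    have hX : MemLp (fun q : ℝ × ℝ => q.1) 2 ξ := by
      have := (memLp_map_measure_iff aestronglyMeasurable_id
        measurable_fst.aemeasurable).mp (hfst ▸ hl2)
      exact this
    have hY : MemLp (fun q : ℝ × ℝ => q.2) 2 ξ := by
      have := (memLp_map_measure_iff aestronglyMeasurable_id
        measurable_snd.aemeasurable).mp (hsnd ▸ hn2)
      exact this
    have hF : MemLp (fun q : ℝ × ℝ => q.1 - mean) 2 ξ := hX.sub (memLp_const mean)
    have hG : MemLp (fun q : ℝ × ℝ => q.2 - mean) 2 ξ := hY.sub (memLp_const mean)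
    have hFG : MemLp ((fun q : ℝ × ℝ => q.1 - mean) - fun q : ℝ × ℝ => q.2 - mean) 2 ξ :=
      hF.sub hG
    -- norms
    have hnf : ‖hF.toLp _‖ = Real.sqrt vl := by
      rw [norm_toLp_two hF, hvl, ← hfst,
        integral_map measurable_fst.aemeasurable
          (Measurable.aestronglyMeasurable (by measurability) : AEStronglyMeasurable (fun t : ℝ => (t - mean) ^ 2) (ξ.map Prod.fst))]
    have hng : ‖hG.toLp _‖ = Real.sqrt vn := by
      rw [norm_toLp_two hG, hvn, ← hsnd,
        integral_map measurable_snd.aemeasurable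
          (Measurable.aestronglyMeasurable (by measurability) : AEStronglyMeasurable (fun t : ℝ => (t - mean) ^ 2) (ξ.map Prod.snd))]
    have hsub : hF.toLp _ - hG.toLp _ = hFG.toLp _ := (hF.toLp_sub hG).symm
    have hnd : ‖hF.toLp _ - hG.toLp _‖ = Real.sqrt (∫ q, (q.1 - q.2) ^ 2 ∂ξ) := by
      rw [hsub, norm_toLp_two hFG]
      congr 1
      apply integral_congr_ae
      filter_upwards with q
      simp only [Pi.sub_apply]
      ring
    calc |Real.sqrt vl - Real.sqrt vn| = |‖hF.toLp _‖ - ‖hG.toLp _‖| := by rw [hnf, hng]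
      _ ≤ ‖hF.toLp _ - hG.toLp _‖ := abs_norm_sub_norm_le _ _
      _ = Real.sqrt (∫ q, (q.1 - q.2) ^ 2 ∂ξ) := hnd
      _ = (∫ q, (q.1 - q.2) ^ 2 ∂ξ) ^ ((1 : ℝ) / 2) := by
          rw [Real.sqrt_eq_rpow]
end

section
/- Let A be a symmetric positive definite d×d real matrix with largest eigenvalue at most L, and let γ ∈ (0, 2/L). Then the linear operator H on d×d matrices defined by H(Q) = A Q + Q A - γ A Q A is symmetric positive definite with respect to the Hilbert–Schmidt inner product, hence invertible. -/
open Matrix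

lemma aux_trace_transpose_mul_self_pos {d : ℕ} (M : Matrix (Fin d) (Fin d) ℝ)
    (h : M ≠ 0) : 0 < (Mᵀ * M).trace := by
  have htr : (Mᵀ * M).trace = ∑ j, ∑ i, M i j ^ 2 := by
    simp [Matrix.trace, Matrix.mul_apply, Matrix.diag, sq]
  rw [htr]
  obtain ⟨i, j, hij⟩ : ∃ i j, M i j ≠ 0 := by
    by_contra hc
    push_neg at hc
    exact h (Matrix.ext fun i j => hc i j)
  refine Finset.sum_pos' (fun j _ => Finset.sum_nonneg fun i _ => sq_nonneg _)
    ⟨j, Finset.mem_univ _, ?_⟩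
  exact Finset.sum_pos' (fun i _ => sq_nonneg _)
    ⟨i, Finset.mem_univ _, pow_two_pos_of_ne_zero hij⟩

open scoped MatrixOrder in
lemma aux_key {d : ℕ} (A B Q : Matrix (Fin d) (Fin d) ℝ)
    (hA : A.PosDef) (hB : B.PosDef) (hQ : Q ≠ 0) :
    0 < (Qᵀ * (A * Q * B)).trace := by
  set S := CFC.sqrt A with hSdef
  set T := CFC.sqrt B with hTdef
  have hSS : S * S = A := CFC.sqrt_mul_sqrt_self A hA.posSemidef.nonneg
  have hTT : T * T = B := CFC.sqrt_mul_sqrt_self B hB.posSemidef.nonneg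
  have hSsym : Sᵀ = S := (CFC.sqrt_nonneg A).posSemidef.1
  have hTsym : Tᵀ = T := (CFC.sqrt_nonneg B).posSemidef.1
  have hSdet : IsUnit S.det := by
    have h1 : S.det * S.det = A.det := by rw [← Matrix.det_mul, hSS]
    have hAdet : A.det ≠ 0 := ne_of_gt hA.det_pos
    exact isUnit_iff_ne_zero.2 fun h => hAdet (by rw [← h1, h, zero_mul])
  have hTdet : IsUnit T.det := by
    have h1 : T.det * T.det = B.det := by rw [← Matrix.det_mul, hTT]
    have hBdet : B.det ≠ 0 := ne_of_gt hB.det_pos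
    exact isUnit_iff_ne_zero.2 fun h => hBdet (by rw [← h1, h, zero_mul])
  have hM : S * Q * T ≠ 0 := by
    intro h
    apply hQ
    have h1 : S⁻¹ * (S * Q * T) = Q * T := by
      rw [← Matrix.mul_assoc, ← Matrix.mul_assoc, Matrix.nonsing_inv_mul S hSdet,
        Matrix.one_mul]
    have h2 : S⁻¹ * (S * Q * T) * T⁻¹ = Q := by
      rw [h1, Matrix.mul_assoc, Matrix.mul_nonsing_inv T hTdet, Matrix.mul_one]
    rw [h, Matrix.mul_zero, Matrix.zero_mul] at h2
    exact h2.symm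
  have hpos := aux_trace_transpose_mul_self_pos (S * Q * T) hM
  have heq : ((S * Q * T)ᵀ * (S * Q * T)).trace = (Qᵀ * (A * Q * B)).trace := by
    rw [Matrix.transpose_mul, Matrix.transpose_mul, hSsym, hTsym]
    have h1 : T * (Qᵀ * S) * (S * Q * T) = T * (Qᵀ * A * Q * T) := by
      rw [← hSS]; simp only [Matrix.mul_assoc]
    rw [h1, Matrix.trace_mul_comm T (Qᵀ * A * Q * T)]
    have h2 : Qᵀ * A * Q * T * T = Qᵀ * (A * Q * B) := by
      rw [← hTT]; simp only [Matrix.mul_assoc]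
    rw [h2]
  rw [heq] at hpos
  exact hpos

/-- The Lyapunov-type operator `H(Q) = AQ + QA - γ AQA` is symmetric positive definite for
the Hilbert–Schmidt inner product (hence invertible) when `A` is symmetric positive
definite with largest eigenvalue at most `L` and `γ ∈ (0, 2/L)`. -/
theorem stmt9 {d : ℕ} (A : Matrix (Fin d) (Fin d) ℝ) (L γ : ℝ)
    (hA : A.PosDef) (hAsym : A.IsSymm)
    (hL : ∀ v : Fin d → ℝ, v ⬝ᵥ (A *ᵥ v) ≤ L * (v ⬝ᵥ v))
    (hγ : γ ∈ Set.Ioo (0 : ℝ) (2 / L)) :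
    (∀ P Q : Matrix (Fin d) (Fin d) ℝ,
      (Pᵀ * (A * Q + Q * A - γ • (A * Q * A))).trace
        = ((A * P + P * A - γ • (A * P * A))ᵀ * Q).trace) ∧
    (∀ Q : Matrix (Fin d) (Fin d) ℝ, Q ≠ 0 →
      0 < (Qᵀ * (A * Q + Q * A - γ • (A * Q * A))).trace) ∧
    Function.Bijective
      (fun Q : Matrix (Fin d) (Fin d) ℝ => A * Q + Q * A - γ • (A * Q * A)) := by
  obtain ⟨hγ0, hγ2⟩ := hγ
  have h2L : 0 < 2 / L := hγ0.trans hγ2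
  have hL0 : 0 < L := by
    rcases div_pos_iff.mp h2L with ⟨_, h⟩ | ⟨h, _⟩
    · exact h
    · linarith
  have hγL : γ * L < 2 := (lt_div_iff₀ hL0).mp hγ2
  set B : Matrix (Fin d) (Fin d) ℝ := 1 - (γ / 2) • A with hBdef
  have hAt : Aᵀ = A := hAsym
  have hB : B.PosDef := by
    refine Matrix.PosDef.of_dotProduct_mulVec_pos ?_ ?_
    · show Bᴴ = B
      rw [hBdef, conjTranspose_sub, conjTranspose_one, conjTranspose_smul, hA.1]
      norm_num
    · intro x hx
      have hsx : star x = x := by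
        funext i
        simp
      have hnn : 0 ≤ x ⬝ᵥ x := Finset.sum_nonneg fun i _ => mul_self_nonneg _
      have hne : x ⬝ᵥ x ≠ 0 := fun h => hx (dotProduct_self_eq_zero.mp h)
      have hxx : 0 < x ⬝ᵥ x := lt_of_le_of_ne hnn (Ne.symm hne)
      have hmv : B *ᵥ x = x - (γ / 2) • (A *ᵥ x) := by
        rw [hBdef, Matrix.sub_mulVec, Matrix.one_mulVec, Matrix.smul_mulVec]
      rw [hsx, hmv, dotProduct_sub, dotProduct_smul, smul_eq_mul]
      have hALx := hL x
      have hcL : (γ / 2) * L < 1 := by linarith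
      have hc0 : 0 < γ / 2 := by linarith
      nlinarith
  have hiden : ∀ Q : Matrix (Fin d) (Fin d) ℝ,
      A * Q * B + B * Q * A = A * Q + Q * A - γ • (A * Q * A) := by
    intro Q
    rw [hBdef]
    rw [Matrix.mul_sub, Matrix.mul_one, Matrix.sub_mul, Matrix.sub_mul, Matrix.one_mul]
    rw [Matrix.mul_smul, Matrix.smul_mul, Matrix.smul_mul]
    module
  have hpos : ∀ Q : Matrix (Fin d) (Fin d) ℝ, Q ≠ 0 →
      0 < (Qᵀ * (A * Q + Q * A - γ • (A * Q * A))).trace := by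
    intro Q hQ
    rw [← hiden Q, Matrix.mul_add, trace_add]
    have h1 := aux_key A B Q hA hB hQ
    have h2 := aux_key B A Q hB hA hQ
    have h2' : 0 < (Qᵀ * (B * Q * A)).trace := h2
    linarith
  refine ⟨?_, hpos, ?_⟩
  · intro P Q
    have key : (A * P + P * A - γ • (A * P * A))ᵀ
        = Pᵀ * A + A * Pᵀ - γ • (A * (Pᵀ * A)) := by
      simp only [Matrix.transpose_sub, Matrix.transpose_add, Matrix.transpose_smul,
        Matrix.transpose_mul, hAt]
    rw [key]
    have e1 : (Pᵀ * (A * Q)).trace = (Pᵀ * A * Q).trace := by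
      rw [Matrix.mul_assoc]
    have e2 : (Pᵀ * (Q * A)).trace = (A * Pᵀ * Q).trace := by
      have h1 : Pᵀ * (Q * A) = (Pᵀ * Q) * A := by simp only [Matrix.mul_assoc]
      have h2 : A * Pᵀ * Q = A * (Pᵀ * Q) := by simp only [Matrix.mul_assoc]
      rw [h1, h2, Matrix.trace_mul_comm]
    have e3 : (Pᵀ * (A * Q * A)).trace = (A * (Pᵀ * A) * Q).trace := by
      have h1 : Pᵀ * (A * Q * A) = (Pᵀ * (A * Q)) * A := by simp only [Matrix.mul_assoc]
      have h2 : A * (Pᵀ * A) * Q = A * (Pᵀ * (A * Q)) := by simp only [Matrix.mul_assoc]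
      rw [h1, h2, Matrix.trace_mul_comm]
    simp only [Matrix.mul_sub, Matrix.mul_add, Matrix.sub_mul, Matrix.add_mul,
      Matrix.mul_smul, Matrix.smul_mul, trace_sub, trace_add, trace_smul]
    rw [e1, e2, e3]
  · let f : Matrix (Fin d) (Fin d) ℝ →ₗ[ℝ] Matrix (Fin d) (Fin d) ℝ :=
      { toFun := fun Q => A * Q + Q * A - γ • (A * Q * A)
        map_add' := by
          intro Q R
          simp only [Matrix.mul_add, Matrix.add_mul, smul_add]
          abel
        map_smul' := by
          intro t Q
          simp only [Matrix.mul_smul, Matrix.smul_mul, smul_sub, smul_add, RingHom.id_apply]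
          rw [smul_comm] }
    have hinj : Function.Injective f := by
      rw [injective_iff_map_eq_zero]
      intro Q hQ
      by_contra h
      have h1 := hpos Q h
      have h2 : (Qᵀ * (A * Q + Q * A - γ • (A * Q * A))).trace = 0 := by
        have hz : A * Q + Q * A - γ • (A * Q * A) = 0 := hQ
        rw [hz, Matrix.mul_zero, trace_zero]
      linarith
    exact ⟨hinj, LinearMap.injective_iff_surjective.mp hinj⟩
end

section
/- Let A be a symmetric positive definite d×d matrix with largest eigenvalue at most L, let 𝓛 be a positive semidefinite operator on d×d matrices (w.r.t. the Hilbert–Schmidt inner product) satisfying 𝓛 ⪯ r² (A ⊗ A), i.e., Tr(Qᵀ𝓛(Q)) ≤ r² Tr(Qᵀ A Q A) for all Q, and let γ ∈ (0, 2/((1+r²)L)). Then the operator G(Q) = A Q + Q A - γ(A Q A + 𝓛(Q)) is positive definite, hence invertible. -/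
open Matrix

/-- Trace of `Bᵀ * B` is positive when `B ≠ 0` (real entries). -/
lemma aux_trace_transpose_mul_self_pos_s10 {m n : Type*} [Fintype m] [Fintype n]
    {B : Matrix m n ℝ} (hB : B ≠ 0) : 0 < (Bᵀ * B).trace := by
  have h1 : (Bᵀ * B).trace = ∑ i, ∑ j, B j i ^ 2 := by
    simp [Matrix.trace, Matrix.mul_apply, Matrix.diag, sq]
  rw [h1]
  have hnn : ∀ i ∈ Finset.univ, (0:ℝ) ≤ ∑ j, B j i ^ 2 :=
    fun i _ => Finset.sum_nonneg fun j _ => sq_nonneg _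
  rcases (Finset.sum_nonneg hnn).lt_or_eq with h | h
  · exact h
  · exfalso
    apply hB
    ext j i
    have h2 := (Finset.sum_eq_zero_iff_of_nonneg hnn).mp h.symm i (Finset.mem_univ i)
    have h3 := (Finset.sum_eq_zero_iff_of_nonneg
      (fun j _ => sq_nonneg (B j i))).mp h2 j (Finset.mem_univ j)
    simpa using pow_eq_zero_iff (n := 2) (by norm_num) |>.mp h3

/-- Trace of a real PSD matrix is nonnegative. -/
lemma aux_trace_nonneg {n : Type*} [Fintype n] {M : Matrix n n ℝ}
    (hM : M.PosSemidef) : 0 ≤ M.trace := by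
  classical
  apply Finset.sum_nonneg
  intro i _
  have := hM.dotProduct_mulVec_nonneg (Pi.single i 1)
  simpa [Matrix.mulVec_single, dotProduct, Pi.single_apply] using this

/-- Trace of product of two real PSD matrices is nonnegative. -/
lemma aux_trace_mul_nonneg {n : Type*} [Fintype n] [DecidableEq n]
    {M N : Matrix n n ℝ} (hM : M.PosSemidef) (hN : N.PosSemidef) :
    0 ≤ (M * N).trace := by
  obtain ⟨Sq, hS, hSH⟩ : ∃ Sq : Matrix n n ℝ, Sq * Sq = M ∧ Sqᴴ = Sq := by
    open scoped MatrixOrder in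
    exact ⟨CFC.sqrt M, CFC.sqrt_mul_sqrt_self M hM.nonneg, (CFC.sqrt_nonneg M).posSemidef.isHermitian⟩
  have h1 : (M * N).trace = (Sq * N * Sqᴴ).trace := by
    conv_lhs => rw [← hS]
    rw [hSH, Matrix.mul_assoc, Matrix.trace_mul_comm, Matrix.mul_assoc]
  rw [h1]
  exact aux_trace_nonneg (hN.mul_mul_conjTranspose_same Sq)

/-- The perturbed Lyapunov operator `G(Q) = AQ + QA - γ(AQA + 𝓛(Q))` is positive definite
(hence invertible) when `A` is symmetric positive definite with largest eigenvalue at most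
`L`, `𝓛` is positive semidefinite with `𝓛 ⪯ r² (A ⊗ A)` and `γ ∈ (0, 2/((1+r²)L))`. -/
theorem stmt10 {d : ℕ} (A : Matrix (Fin d) (Fin d) ℝ) (L r γ : ℝ)
    (hA : A.PosDef) (hAsym : A.IsSymm)
    (hL : ∀ v : Fin d → ℝ, v ⬝ᵥ (A *ᵥ v) ≤ L * (v ⬝ᵥ v))
    (Lop : Matrix (Fin d) (Fin d) ℝ →ₗ[ℝ] Matrix (Fin d) (Fin d) ℝ)
    (hLpsd : ∀ Q : Matrix (Fin d) (Fin d) ℝ, 0 ≤ (Qᵀ * Lop Q).trace)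
    (hLdom : ∀ Q : Matrix (Fin d) (Fin d) ℝ,
      (Qᵀ * Lop Q).trace ≤ r ^ 2 * (Qᵀ * (A * Q * A)).trace)
    (hγ : γ ∈ Set.Ioo (0 : ℝ) (2 / ((1 + r ^ 2) * L))) :
    (∀ Q : Matrix (Fin d) (Fin d) ℝ, Q ≠ 0 →
      0 < (Qᵀ * (A * Q + Q * A - γ • (A * Q * A + Lop Q))).trace) ∧
    Function.Bijective
      (fun Q : Matrix (Fin d) (Fin d) ℝ => A * Q + Q * A - γ • (A * Q * A + Lop Q)) := by
  obtain ⟨hγ0, hγ2⟩ := hγ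
  have hApsd := hA.posSemidef
  have hAH : Aᴴ = A := hA.isHermitian
  obtain ⟨S, hSS, hSH⟩ : ∃ S : Matrix (Fin d) (Fin d) ℝ, S * S = A ∧ Sᴴ = S := by
    open scoped MatrixOrder in
    exact ⟨CFC.sqrt A, CFC.sqrt_mul_sqrt_self A hApsd.nonneg, (CFC.sqrt_nonneg A).posSemidef.isHermitian⟩
  have hAunit := hA.isUnit
  have key : ∀ Q : Matrix (Fin d) (Fin d) ℝ, Q ≠ 0 →
      0 < (Qᵀ * (A * Q + Q * A - γ • (A * Q * A + Lop Q))).trace := by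
    intro Q hQ
    -- transpose vs conjTranspose
    have hQT : Qᵀ = Qᴴ := (Matrix.conjTranspose_eq_transpose_of_trivial Q).symm
    -- names
    set S1 := (Qᵀ * (A * Q)).trace with hS1def
    set S2 := (Qᵀ * (Q * A)).trace with hS2def
    set T := (Qᵀ * (A * Q * A)).trace with hTdef
    set ℓ := (Qᵀ * Lop Q).trace with hℓdef
    -- expand the trace
    have hexp : (Qᵀ * (A * Q + Q * A - γ • (A * Q * A + Lop Q))).trace
        = S1 + S2 - γ * (T + ℓ) := by
      simp only [Matrix.mul_add, Matrix.mul_sub, Matrix.mul_smul,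
        Matrix.trace_add, Matrix.trace_sub, Matrix.trace_smul, smul_eq_mul]
      rfl
    rw [hexp]
    -- S * Q ≠ 0 and Q * S ≠ 0
    have hSQ : S * Q ≠ 0 := by
      intro h
      apply hQ
      have hAQ : A * Q = 0 := by rw [← hSS, Matrix.mul_assoc, h, Matrix.mul_zero]
      have := hAunit.invertible
      calc Q = ⅟A * (A * Q) := by rw [← Matrix.mul_assoc, invOf_mul_self, Matrix.one_mul]
        _ = 0 := by rw [hAQ, Matrix.mul_zero]
    have hQS : Q * S ≠ 0 := by
      intro h
      apply hQ
      have hQA : Q * A = 0 := by rw [← hSS, ← Matrix.mul_assoc, h, Matrix.zero_mul]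
      have := hAunit.invertible
      calc Q = (Q * A) * ⅟A := by rw [Matrix.mul_assoc, mul_invOf_self, Matrix.mul_one]
        _ = 0 := by rw [hQA, Matrix.zero_mul]
    -- S1 > 0
    have hST : Sᵀ = S := by rw [← Matrix.conjTranspose_eq_transpose_of_trivial, hSH]
    have hS1pos : 0 < S1 := by
      have h1 : S1 = ((S * Q)ᵀ * (S * Q)).trace := by
        rw [hS1def, Matrix.transpose_mul, hST]
        conv_lhs => rw [← hSS]
        simp only [Matrix.mul_assoc]
      rw [h1]
      exact aux_trace_transpose_mul_self_pos_s10 hSQ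
    -- S2 > 0
    have hS2pos : 0 < S2 := by
      have h1 : ((Q * S)ᵀ * (Q * S)).trace = (Qᵀ * (Q * (S * S))).trace := by
        rw [Matrix.transpose_mul, hST]
        simp only [Matrix.mul_assoc]
        rw [Matrix.trace_mul_comm S (Qᵀ * (Q * S))]
        simp only [Matrix.mul_assoc]
      have h2 : S2 = ((Q * S)ᵀ * (Q * S)).trace := by
        rw [h1, hSS, hS2def]
      rw [h2]
      exact aux_trace_transpose_mul_self_pos_s10 hQS
    -- L • 1 - A is PSD
    have hLA : (L • (1 : Matrix (Fin d) (Fin d) ℝ) - A).PosSemidef := by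
      refine Matrix.PosSemidef.of_dotProduct_mulVec_nonneg ?_ ?_
      · rw [Matrix.IsHermitian]
        rw [Matrix.conjTranspose_sub, Matrix.conjTranspose_smul, Matrix.conjTranspose_one, hAH]
        simp
      · intro x
        have h1 := hL x
        have hstar : star x = x := by simp
        rw [hstar]
        rw [Matrix.sub_mulVec, Matrix.smul_mulVec, Matrix.one_mulVec,
          dotProduct_sub, dotProduct_smul, smul_eq_mul]
        linarith
    -- the PSD matrices QᵀAQ and QAQᵀ
    have hM1 : (Qᵀ * A * Q).PosSemidef := by
      have := hApsd.conjTranspose_mul_mul_same Q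
      rwa [← hQT] at this
    have hM2 : (Q * A * Qᵀ).PosSemidef := by
      have := hApsd.mul_mul_conjTranspose_same Q
      rwa [← hQT] at this
    -- T ≥ 0
    have hT0 : 0 ≤ T := by
      have h1 : T = ((Qᵀ * A * Q) * A).trace := by
        rw [hTdef]; simp only [Matrix.mul_assoc]
      rw [h1]
      exact aux_trace_mul_nonneg hM1 hApsd
    -- T ≤ L * S1
    have hT1 : T ≤ L * S1 := by
      have h1 : 0 ≤ ((Qᵀ * A * Q) * (L • (1 : Matrix (Fin d) (Fin d) ℝ) - A)).trace :=
        aux_trace_mul_nonneg hM1 hLA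
      have h2 : ((Qᵀ * A * Q) * (L • (1 : Matrix (Fin d) (Fin d) ℝ) - A)).trace
          = L * S1 - T := by
        rw [Matrix.mul_sub, Matrix.trace_sub, Matrix.mul_smul, Matrix.mul_one,
          Matrix.trace_smul, smul_eq_mul, hS1def, hTdef]
        simp only [Matrix.mul_assoc]
      linarith [h2 ▸ h1]
    -- T ≤ L * S2
    have hT2 : T ≤ L * S2 := by
      have h1 : 0 ≤ ((Q * A * Qᵀ) * (L • (1 : Matrix (Fin d) (Fin d) ℝ) - A)).trace :=
        aux_trace_mul_nonneg hM2 hLA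
      have hTalt : T = ((Q * A * Qᵀ) * A).trace := by
        rw [hTdef, Matrix.trace_mul_comm Qᵀ (A * Q * A)]
        simp only [Matrix.mul_assoc]
        rw [Matrix.trace_mul_comm A (Q * (A * Qᵀ))]
        simp only [Matrix.mul_assoc]
      have hS2alt : S2 = (Q * A * Qᵀ).trace := by
        rw [hS2def, Matrix.trace_mul_comm, Matrix.mul_assoc]
      have h2 : ((Q * A * Qᵀ) * (L • (1 : Matrix (Fin d) (Fin d) ℝ) - A)).trace
          = L * S2 - T := by
        rw [Matrix.mul_sub, Matrix.trace_sub, Matrix.mul_smul, Matrix.mul_one,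
          Matrix.trace_smul, smul_eq_mul, hS2alt, hTalt]
      linarith [h2 ▸ h1]
    -- L > 0
    have hne : Nonempty (Fin d) := by
      by_contra h
      exact hQ (by ext i j; exact absurd ⟨i⟩ h)
    obtain ⟨i⟩ := hne
    have hLpos : 0 < L := by
      have h1 := hA.dotProduct_mulVec_pos (x := Pi.single i 1) (by simp [Function.ne_iff])
      have h2 := hL (Pi.single i 1)
      have h3 : (Pi.single i 1 : Fin d → ℝ) ⬝ᵥ (Pi.single i 1) = 1 := by
        simp [dotProduct, Pi.single_apply]
      have h4 : (0:ℝ) < Pi.single i 1 ⬝ᵥ (A *ᵥ Pi.single i 1) := by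
        simpa using h1
      rw [h3, mul_one] at h2
      linarith
    -- ℓ bounds
    have hℓ0 : 0 ≤ ℓ := hLpsd Q
    have hℓr : ℓ ≤ r ^ 2 * T := hLdom Q
    -- γ bound
    have hdenom : 0 < (1 + r ^ 2) * L := by positivity
    have hγL : γ * ((1 + r ^ 2) * L) < 2 := by
      rw [lt_div_iff₀ hdenom] at hγ2
      linarith
    -- conclude
    rcases hT0.lt_or_eq with hTpos | hTzero
    · nlinarith [mul_nonneg hγ0.le hℓ0, mul_pos hγ0 hTpos,
        mul_le_mul_of_nonneg_left hℓr hγ0.le]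
    · have hℓz : ℓ = 0 := le_antisymm (by nlinarith) hℓ0
      rw [← hTzero, hℓz]
      simp
      linarith
  refine ⟨key, ?_⟩
  let f : Matrix (Fin d) (Fin d) ℝ →ₗ[ℝ] Matrix (Fin d) (Fin d) ℝ :=
    { toFun := fun Q => A * Q + Q * A - γ • (A * Q * A + Lop Q)
      map_add' := by
        intro P Q
        simp only [Matrix.mul_add, Matrix.add_mul, map_add, smul_add]
        abel
      map_smul' := by
        intro c Q
        simp only [Matrix.mul_smul, Matrix.smul_mul, LinearMap.map_smul, RingHom.id_apply,
          smul_add, smul_sub, smul_comm c γ] }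
  have hfinj : Function.Injective f := by
    rw [← LinearMap.ker_eq_bot, LinearMap.ker_eq_bot']
    intro Q hfQ
    by_contra hQ
    have h1 := key Q hQ
    have h2 : (Qᵀ * (A * Q + Q * A - γ • (A * Q * A + Lop Q))).trace = 0 := by
      have : A * Q + Q * A - γ • (A * Q * A + Lop Q) = 0 := hfQ
      rw [this, Matrix.mul_zero, Matrix.trace_zero]
    linarith
  have hfsurj : Function.Surjective f := LinearMap.injective_iff_surjective.mp hfinj
  exact ⟨hfinj, hfsurj⟩
end

section
/- Let C be the stationary covariance of the LMC chain for a Gaussian target with symmetric positive definite precision matrix Σ (smallest eigenvalue m, largest eigenvalue L) and step size γ ∈ (0, 2/L), i.e., C solves ΣC + CΣ - γΣCΣ = 2Id. Then Σ^{-1} ⪯ C ⪯ (1 - γL/2)^{-1} Σ^{-1}; in particular, setting γ = η/N with m proportional to N, Tr(C) = Θ(d/N) as N → ∞. -/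
open Matrix

/-- The stationary covariance `C` of LMC for a Gaussian target with precision `Σ`
(eigenvalues in `[m, L]`) and step size `γ ∈ (0, 2/L)` satisfies
`Σ⁻¹ ⪯ C ⪯ (1 - γL/2)⁻¹ Σ⁻¹`; in particular `d/L ≤ Tr(C) ≤ (1 - γL/2)⁻¹ d/m`
(so that `Tr C = Θ(d/N)` when `γ = η/N` and `m, L` are proportional to `N`). -/
theorem stmt12 {d : ℕ} (Sig C : Matrix (Fin d) (Fin d) ℝ) (m L γ : ℝ)
    (hSig : Sig.PosDef) (hsym : Sig.IsSymm) (hCsym : C.IsSymm)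
    (hm : 0 < m)
    (hlow : ∀ v : Fin d → ℝ, m * (v ⬝ᵥ v) ≤ v ⬝ᵥ (Sig *ᵥ v))
    (hup : ∀ v : Fin d → ℝ, v ⬝ᵥ (Sig *ᵥ v) ≤ L * (v ⬝ᵥ v))
    (hγ : γ ∈ Set.Ioo (0 : ℝ) (2 / L))
    (heq : Sig * C + C * Sig - γ • (Sig * C * Sig) = (2 : ℝ) • 1) :
    (C - Sig⁻¹).PosSemidef ∧
    ((1 - γ * L / 2)⁻¹ • Sig⁻¹ - C).PosSemidef ∧
    (d : ℝ) / L ≤ C.trace ∧ C.trace ≤ (1 - γ * L / 2)⁻¹ * (d : ℝ) / m := by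
  obtain ⟨hγ0, hγ2⟩ := hγ
  have hL : 0 < L := by
    rcases div_pos_iff.mp (hγ0.trans hγ2) with ⟨-, h⟩ | ⟨h, -⟩
    · exact h
    · norm_num at h
  have hγL : γ * L < 2 := by
    have := (lt_div_iff₀ hL).mp hγ2; linarith
  have hβ : 0 < 1 - γ * L / 2 := by linarith
  have hA : Sig.IsHermitian := by
    rwa [Matrix.IsHermitian, conjTranspose_eq_transpose_of_trivial]
  set U : Matrix (Fin d) (Fin d) ℝ := (hA.eigenvectorUnitary : Matrix (Fin d) (Fin d) ℝ) with hUdef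
  set s : Fin d → ℝ := hA.eigenvalues with hsdef
  have hUU : star U * U = 1 := mem_unitaryGroup_iff'.mp hA.eigenvectorUnitary.2
  have hUU' : U * star U = 1 := mem_unitaryGroup_iff.mp hA.eigenvectorUnitary.2
  have hdiag : star U * Sig * U = diagonal s := by
    simpa [Unitary.conjStarAlgAut_apply] using hA.conjStarAlgAut_star_eigenvectorUnitary
  -- eigenvalue bounds
  have hsm : ∀ j, m ≤ s j ∧ s j ≤ L := by
    intro j
    set v : Fin d → ℝ := fun i => U i j with hv
    have hvv : v ⬝ᵥ v = 1 := by
      have h := congrFun (congrFun hUU j) j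
      simpa [Matrix.mul_apply, dotProduct, Matrix.one_apply, hv, mul_comm] using h
    have hvSv : v ⬝ᵥ (Sig *ᵥ v) = s j := by
      have h := congrFun (congrFun hdiag j) j
      simp only [Matrix.mul_apply, Matrix.diagonal_apply_eq, Matrix.star_apply, star_trivial] at h
      rw [← h]
      simp only [mulVec, dotProduct, Finset.mul_sum, Finset.sum_mul, hv]
      rw [Finset.sum_comm]
      apply Finset.sum_congr rfl; intro k _
      apply Finset.sum_congr rfl; intro l _
      ring
    constructor
    · have := hlow v; rw [hvv, hvSv] at this; linarith
    · have := hup v; rw [hvv, hvSv] at this; linarith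
  have hspos : ∀ i, 0 < s i := fun i => lt_of_lt_of_le hm (hsm i).1
  have hγs : ∀ i, γ * s i < 2 := by
    intro i
    have := mul_le_mul_of_nonneg_left (hsm i).2 hγ0.le
    linarith
  have hden : ∀ i, 0 < 2 * s i - γ * s i ^ 2 := by
    intro i
    have h1 := mul_pos (hspos i) (show (0:ℝ) < 2 - γ * s i by linarith [hγs i])
    nlinarith [h1]
  -- conjugation
  have hconj : ∀ X Y : Matrix (Fin d) (Fin d) ℝ,
      (star U * X * U) * (star U * Y * U) = star U * (X * Y) * U := by
    intro X Y
    calc (star U * X * U) * (star U * Y * U)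
        = star U * X * (U * star U) * (Y * U) := by simp only [Matrix.mul_assoc]
      _ = star U * (X * Y) * U := by rw [hUU']; simp only [Matrix.mul_one, Matrix.mul_assoc]
  set C' : Matrix (Fin d) (Fin d) ℝ := star U * C * U with hC'def
  have key : diagonal s * C' + C' * diagonal s - γ • (diagonal s * C' * diagonal s)
      = (2 : ℝ) • (1 : Matrix (Fin d) (Fin d) ℝ) := by
    have h2 := congrArg (fun M => star U * M * U) heq
    simp only [Matrix.mul_add, Matrix.add_mul, Matrix.mul_sub, Matrix.sub_mul,
      Matrix.mul_smul, Matrix.smul_mul, Matrix.mul_one] at h2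
    rw [← hdiag, hC'def, hconj Sig C, hconj C Sig, hconj (Sig * C) Sig, h2, hUU]
  set c : Fin d → ℝ := fun i => 2 / (2 * s i - γ * s i ^ 2) with hcdef
  have hC'diag : C' = diagonal c := by
    ext i j
    have h := congrFun (congrFun key i) j
    simp only [Matrix.sub_apply, Matrix.add_apply, Matrix.smul_apply, Matrix.diagonal_mul,
      Matrix.mul_diagonal, Matrix.one_apply, smul_eq_mul] at h
    by_cases hij : i = j
    · subst hij
      rw [if_pos rfl] at h
      simp only [Matrix.diagonal_apply_eq, hcdef]
      rw [eq_div_iff (hden i).ne']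
      ring_nf at h ⊢
      linarith
    · rw [if_neg hij] at h
      rw [Matrix.diagonal_apply_ne _ hij]
      have hp : 0 < s i + s j - γ * (s i * s j) := by
        nlinarith [mul_pos (hspos i) (show (0:ℝ) < 2 - γ * s j by linarith [hγs j]),
          mul_pos (hspos j) (show (0:ℝ) < 2 - γ * s i by linarith [hγs i])]
      have h0 : (s i + s j - γ * (s i * s j)) * C' i j = 0 := by linear_combination h
      exact (mul_eq_zero.mp h0).resolve_left hp.ne'
  have hsandwich : ∀ X : Matrix (Fin d) (Fin d) ℝ, U * (star U * X * U) * star U = X := by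
    intro X
    calc U * (star U * X * U) * star U = (U * star U) * X * (U * star U) := by
          simp only [Matrix.mul_assoc]
      _ = X := by rw [hUU']; simp
  have hCrep : C = U * diagonal c * star U := by
    rw [← hC'diag, hC'def, hsandwich]
  have hspec : Sig = U * diagonal s * star U := by rw [← hdiag, hsandwich]
  have hInv : Sig⁻¹ = U * diagonal (fun i => (s i)⁻¹) * star U := by
    apply Matrix.inv_eq_right_inv
    rw [hspec]
    calc (U * diagonal s * star U) * (U * diagonal (fun i => (s i)⁻¹) * star U)
        = U * (diagonal s * ((star U * U) * (diagonal (fun i => (s i)⁻¹) * star U))) := by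
          simp only [Matrix.mul_assoc]
      _ = U * (diagonal s * diagonal fun i => (s i)⁻¹) * star U := by
          rw [hUU, Matrix.one_mul]; simp only [Matrix.mul_assoc]
      _ = 1 := by
          rw [Matrix.diagonal_mul_diagonal]
          have : (fun i => s i * (s i)⁻¹) = fun _ => (1:ℝ) := by
            funext i; exact mul_inv_cancel₀ (hspos i).ne'
          rw [this, Matrix.diagonal_one, Matrix.mul_one, hUU']
  have hpsd : ∀ a : Fin d → ℝ, (∀ i, 0 ≤ a i) → (U * diagonal a * star U).PosSemidef := by
    intro a ha
    have := (Matrix.posSemidef_diagonal_iff.mpr ha).mul_mul_conjTranspose_same U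
    simpa [Matrix.star_eq_conjTranspose] using this
  have hcinv : ∀ i, (s i)⁻¹ ≤ c i := by
    intro i
    rw [hcdef, inv_eq_one_div, div_le_div_iff₀ (hspos i) (hden i)]
    nlinarith [mul_nonneg hγ0.le (sq_nonneg (s i))]
  have hcup : ∀ i, c i ≤ (1 - γ * L / 2)⁻¹ * (s i)⁻¹ := by
    intro i
    rw [show (1 - γ * L / 2)⁻¹ * (s i)⁻¹ = 1 / ((1 - γ * L / 2) * s i) by
      rw [one_div, mul_inv]]
    rw [hcdef, div_le_div_iff₀ (hden i) (mul_pos hβ (hspos i))]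
    nlinarith [mul_le_mul_of_nonneg_right
      (mul_le_mul_of_nonneg_left (hsm i).2 hγ0.le) (hspos i).le]
  constructor
  · have : C - Sig⁻¹ = U * diagonal (fun i => c i - (s i)⁻¹) * star U := by
      rw [hCrep, hInv, show diagonal (fun i => c i - (s i)⁻¹)
        = diagonal c - diagonal fun i => (s i)⁻¹ from (Matrix.diagonal_sub _ _).symm,
        Matrix.mul_sub, Matrix.sub_mul]
    rw [this]
    exact hpsd _ fun i => sub_nonneg.mpr (hcinv i)
  refine ⟨?_, ?_, ?_⟩
  · have : (1 - γ * L / 2)⁻¹ • Sig⁻¹ - C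
        = U * diagonal (fun i => (1 - γ * L / 2)⁻¹ * (s i)⁻¹ - c i) * star U := by
      rw [hCrep, hInv, show diagonal (fun i => (1 - γ * L / 2)⁻¹ * (s i)⁻¹ - c i)
        = (1 - γ * L / 2)⁻¹ • diagonal (fun i => (s i)⁻¹) - diagonal c from by
          ext i j
          by_cases hij : i = j
          · subst hij; simp
          · simp [Matrix.diagonal_apply_ne _ hij],
        Matrix.mul_sub, Matrix.sub_mul, Matrix.mul_smul, Matrix.smul_mul]
    rw [this]
    exact hpsd _ fun i => sub_nonneg.mpr (hcup i)
  · have htr : C.trace = ∑ i, c i := by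
      rw [hCrep, Matrix.trace_mul_cycle, hUU, Matrix.one_mul, Matrix.trace_diagonal]
    rw [htr]
    calc (d : ℝ) / L = ∑ _i : Fin d, L⁻¹ := by
          simp [Finset.sum_const, nsmul_eq_mul, div_eq_mul_inv]
      _ ≤ ∑ i, c i := Finset.sum_le_sum fun i _ =>
          le_trans (inv_anti₀ (hspos i) (hsm i).2) (hcinv i)
  · have htr : C.trace = ∑ i, c i := by
      rw [hCrep, Matrix.trace_mul_cycle, hUU, Matrix.one_mul, Matrix.trace_diagonal]
    rw [htr]
    calc ∑ i, c i ≤ ∑ _i : Fin d, (1 - γ * L / 2)⁻¹ * m⁻¹ :=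
          Finset.sum_le_sum fun i _ => (hcup i).trans
            (mul_le_mul_of_nonneg_left (inv_anti₀ hm (hsm i).1)
              (inv_nonneg.mpr hβ.le))
      _ = (1 - γ * L / 2)⁻¹ * (d : ℝ) / m := by
          simp [Finset.sum_const, nsmul_eq_mul, div_eq_mul_inv]; ring
end

section
/- Consider the stationary covariance matrices of SGLD and SGLDFP for Bayesian linear regression: C_SGLD = G^{-1}(2Id + γ(N/p)M) and C_FP = G^{-1}(2Id), where G(Q) = ΣQ + QΣ - γ(ΣQΣ + T(Q)) is positive definite, T is the positive semidefinite multiplicative-noise operator with T ⪯ r²(Σ⊗Σ), and M = Σ_{i=1}^N ((x_iᵀθ⋆ - y_i)x_i/σ_y² + θ⋆/σ_p²)^{⊗2} ⪰ 0. Then C_SGLD ⪰ C_FP (as symmetric matrices), with Tr(C_SGLD) - Tr(C_FP) ≥ 0 and equality iff M = 0. -/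
open Matrix

variable {n : Type*} [Fintype n] [DecidableEq n]

lemma aux_symm_of_psd {A : Matrix n n ℝ} (hA : A.PosSemidef) : Aᵀ = A := by
  have := hA.1
  rwa [Matrix.IsHermitian, conjTranspose_eq_transpose_of_trivial] at this

lemma aux_psd_trace_nonneg {A : Matrix n n ℝ} (hA : A.PosSemidef) : 0 ≤ A.trace := by
  rw [Matrix.trace]
  refine Finset.sum_nonneg fun i _ => ?_
  have := hA.dotProduct_mulVec_nonneg (Pi.single i 1)
  simpa [Matrix.diag_apply] using this

open scoped MatrixOrder in
lemma aux_psd_trace_mul_nonneg {A B : Matrix n n ℝ} (hA : A.PosSemidef) (hB : B.PosSemidef) :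
    0 ≤ (A * B).trace := by
  obtain ⟨R, rfl⟩ : ∃ R : Matrix n n ℝ, B = Rᴴ * R :=
    ⟨CFC.sqrt B, by rw [(CFC.sqrt_nonneg B).posSemidef.1.eq, CFC.sqrt_mul_sqrt_self B hB.nonneg]⟩
  have h1 : (A * (Rᴴ * R)).trace = (R * A * Rᴴ).trace := by
    rw [← Matrix.mul_assoc, Matrix.trace_mul_comm, Matrix.mul_assoc]
  rw [h1]
  exact aux_psd_trace_nonneg (hA.mul_mul_conjTranspose_same R)

lemma aux_trace_quad_eq (Sig R : Matrix n n ℝ) :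
    (Rᵀ * (Sig * R)).trace = ∑ j, (fun i => R i j) ⬝ᵥ (Sig *ᵥ fun i => R i j) := by
  rw [Matrix.trace]
  refine Finset.sum_congr rfl fun j _ => ?_
  simp [Matrix.diag_apply, Matrix.mul_apply, Matrix.mulVec, dotProduct]

lemma aux_trace_sq_eq (R : Matrix n n ℝ) :
    (Rᵀ * R).trace = ∑ j, (fun i => R i j) ⬝ᵥ (fun i => R i j) := by
  rw [Matrix.trace]
  refine Finset.sum_congr rfl fun j _ => ?_
  simp [Matrix.diag_apply, Matrix.mul_apply, dotProduct]

lemma aux_trace_quad_le (Sig : Matrix n n ℝ) (L : ℝ)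
    (hL : ∀ v : n → ℝ, v ⬝ᵥ (Sig *ᵥ v) ≤ L * (v ⬝ᵥ v)) (R : Matrix n n ℝ) :
    (Rᵀ * (Sig * R)).trace ≤ L * (Rᵀ * R).trace := by
  rw [aux_trace_quad_eq, aux_trace_sq_eq, Finset.mul_sum]
  exact Finset.sum_le_sum fun j _ => hL _

lemma aux_trace_quad_pos {Sig : Matrix n n ℝ} (hSig : Sig.PosDef) {R : Matrix n n ℝ}
    (hR : R ≠ 0) : 0 < (Rᵀ * (Sig * R)).trace := by
  rw [aux_trace_quad_eq]
  obtain ⟨i, j, hij⟩ : ∃ i j, R i j ≠ 0 := by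
    by_contra h
    push_neg at h
    exact hR (by ext i j; simpa using h i j)
  refine Finset.sum_pos' (fun k _ => ?_) ⟨j, Finset.mem_univ j, ?_⟩
  · have := hSig.posSemidef.dotProduct_mulVec_nonneg (fun i => R i k)
    simpa using this
  · have hcol : (fun i => R i j) ≠ 0 := fun h => hij (congrFun h i)
    have := hSig.dotProduct_mulVec_pos hcol
    simpa using this

lemma aux_psd_trace_eq_zero {A : Matrix n n ℝ} (hA : A.PosSemidef) (h : A.trace = 0) :
    A = 0 := by
  have hH := hA.1
  have hspec := hH.spectral_theorem
  rw [RCLike.ofReal_real_eq_id, Function.id_comp, Unitary.conjStarAlgAut_apply] at hspec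
  set U : Matrix n n ℝ := (hH.eigenvectorUnitary : Matrix n n ℝ) with hU
  have hUU : star U * U = 1 := Matrix.mem_unitaryGroup_iff'.mp hH.eigenvectorUnitary.2
  have htr : A.trace = ∑ i, hH.eigenvalues i := by
    have h1 := congrArg Matrix.trace hspec
    rw [Matrix.trace_mul_cycle, hUU, one_mul, Matrix.trace_diagonal] at h1
    exact h1
  have hev : (hH.eigenvalues : n → ℝ) = 0 := by
    funext i
    refine Finset.sum_eq_zero_iff_of_nonneg (fun i _ => hA.eigenvalues_nonneg i) |>.mp
      (by rw [← htr, h]) i (Finset.mem_univ i)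
  calc A = U * diagonal hH.eigenvalues * star U := hspec
    _ = 0 := by rw [hev, show ((0 : n → ℝ)) = fun _ => (0:ℝ) from rfl, Matrix.diagonal_zero, Matrix.mul_zero, Matrix.zero_mul]

open scoped MatrixOrder in
lemma aux_s_le {Sig : Matrix n n ℝ} (hSig : Sig.PosSemidef) (L : ℝ)
    (hL : ∀ v : n → ℝ, v ⬝ᵥ (Sig *ᵥ v) ≤ L * (v ⬝ᵥ v)) (Q : Matrix n n ℝ) :
    (Qᵀ * (Sig * Q * Sig)).trace ≤ L * (Qᵀ * (Q * Sig)).trace ∧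
    (Qᵀ * (Sig * Q * Sig)).trace ≤ L * (Qᵀ * (Sig * Q)).trace := by
  have hSigT : Sigᵀ = Sig := aux_symm_of_psd hSig
  set S := CFC.sqrt Sig with hSdef
  have hSS : S * S = Sig := CFC.sqrt_mul_sqrt_self Sig hSig.nonneg
  have hST : Sᵀ = S := aux_symm_of_psd (CFC.sqrt_nonneg Sig).posSemidef
  constructor
  · -- s ≤ L * t₂  via R = Q * S
    have h := aux_trace_quad_le Sig L hL (Q * S)
    have e1 : ((Q * S)ᵀ * (Sig * (Q * S))).trace = (Qᵀ * (Sig * Q * Sig)).trace := by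
      rw [transpose_mul, hST]
      calc (S * Qᵀ * (Sig * (Q * S))).trace
          = (S * (Qᵀ * (Sig * (Q * S)))).trace := by rw [Matrix.mul_assoc]
        _ = ((Qᵀ * (Sig * (Q * S))) * S).trace := Matrix.trace_mul_comm _ _
        _ = (Qᵀ * (Sig * Q * Sig)).trace := by
            rw [show Qᵀ * (Sig * (Q * S)) * S = Qᵀ * (Sig * Q * (S * S)) by
              simp only [Matrix.mul_assoc], hSS]
    have e2 : ((Q * S)ᵀ * (Q * S)).trace = (Qᵀ * (Q * Sig)).trace := by
      rw [transpose_mul, hST]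
      calc (S * Qᵀ * (Q * S)).trace
          = (S * (Qᵀ * (Q * S))).trace := by rw [Matrix.mul_assoc]
        _ = ((Qᵀ * (Q * S)) * S).trace := Matrix.trace_mul_comm _ _
        _ = (Qᵀ * (Q * Sig)).trace := by
            rw [show Qᵀ * (Q * S) * S = Qᵀ * (Q * (S * S)) by simp only [Matrix.mul_assoc], hSS]
    rw [e1, e2] at h; exact h
  · -- s ≤ L * t₁  via R = Qᵀ * S
    have h := aux_trace_quad_le Sig L hL (Qᵀ * S)
    have e1 : ((Qᵀ * S)ᵀ * (Sig * (Qᵀ * S))).trace = (Qᵀ * (Sig * Q * Sig)).trace := by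
      rw [transpose_mul, hST, transpose_transpose]
      calc (S * Q * (Sig * (Qᵀ * S))).trace
          = (S * (Q * (Sig * (Qᵀ * S)))).trace := by rw [Matrix.mul_assoc]
        _ = ((Q * (Sig * (Qᵀ * S))) * S).trace := Matrix.trace_mul_comm _ _
        _ = (Q * (Sig * (Qᵀ * Sig))).trace := by
            rw [show Q * (Sig * (Qᵀ * S)) * S = Q * (Sig * (Qᵀ * (S * S))) by
              simp only [Matrix.mul_assoc], hSS]
        _ = (Sig * (Q * (Sig * Qᵀ))).trace := by
            rw [show Q * (Sig * (Qᵀ * Sig)) = Q * (Sig * Qᵀ) * Sig from by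
              simp only [Matrix.mul_assoc], Matrix.trace_mul_comm]
        _ = (Qᵀ * (Sig * Q * Sig)).trace := by
            have h1 : (Sig * (Q * (Sig * Qᵀ))).trace
                = ((S * (Q * S)) * (S * (Qᵀ * S))).trace := by
              rw [← hSS]
              calc (S * S * (Q * (S * S * Qᵀ))).trace
                  = (S * (S * (Q * (S * (S * Qᵀ))))).trace := by simp only [Matrix.mul_assoc]
                _ = ((S * (Q * (S * (S * Qᵀ)))) * S).trace := Matrix.trace_mul_comm _ _
                _ = ((S * (Q * S)) * (S * (Qᵀ * S))).trace := by simp only [Matrix.mul_assoc]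
            have h2 : (Qᵀ * (Sig * Q * Sig)).trace
                = ((S * (Qᵀ * S)) * (S * (Q * S))).trace := by
              rw [show Qᵀ * (Sig * Q * Sig) = Qᵀ * (Sig * (Q * Sig)) from by
                simp only [Matrix.mul_assoc], ← hSS]
              calc (Qᵀ * (S * S * (Q * (S * S)))).trace
                  = ((Qᵀ * (S * (S * (Q * (S * S))))) ).trace := by simp only [Matrix.mul_assoc]
                _ = (S * (Qᵀ * (S * (S * (Q * S))))).trace := by
                    rw [Matrix.trace_mul_comm S]; simp only [Matrix.mul_assoc]
                _ = ((S * (Qᵀ * S)) * (S * (Q * S))).trace := by simp only [Matrix.mul_assoc]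
            rw [h1, h2, Matrix.trace_mul_comm]
    have e2 : ((Qᵀ * S)ᵀ * (Qᵀ * S)).trace = (Qᵀ * (Sig * Q)).trace := by
      rw [transpose_mul, hST, transpose_transpose]
      calc (S * Q * (Qᵀ * S)).trace
          = (S * (Q * (Qᵀ * S))).trace := by rw [Matrix.mul_assoc]
        _ = ((Q * (Qᵀ * S)) * S).trace := Matrix.trace_mul_comm _ _
        _ = (Q * (Qᵀ * Sig)).trace := by
            rw [show Q * (Qᵀ * S) * S = Q * (Qᵀ * (S * S)) by simp only [Matrix.mul_assoc], hSS]
        _ = (Qᵀ * (Sig * Q)).trace := by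
            rw [Matrix.trace_mul_comm, show Qᵀ * Sig * Q = Qᵀ * (Sig * Q) by
              rw [Matrix.mul_assoc]]
    rw [e1, e2] at h; exact h

/-- The operator `G`. -/
def auxG {d N : ℕ} (γ np : ℝ) (Sig : Matrix (Fin d) (Fin d) ℝ)
    (B : Fin N → Matrix (Fin d) (Fin d) ℝ) (Q : Matrix (Fin d) (Fin d) ℝ) :
    Matrix (Fin d) (Fin d) ℝ :=
  Sig * Q + Q * Sig - γ • (Sig * Q * Sig + np • ∑ i, B i * Q * B i)

lemma auxG_sub {d N : ℕ} (γ np : ℝ) (Sig : Matrix (Fin d) (Fin d) ℝ)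
    (B : Fin N → Matrix (Fin d) (Fin d) ℝ) (P Q : Matrix (Fin d) (Fin d) ℝ) :
    auxG γ np Sig B (P - Q) = auxG γ np Sig B P - auxG γ np Sig B Q := by
  simp only [auxG, Matrix.mul_sub, Matrix.sub_mul, Finset.sum_sub_distrib, smul_sub, smul_add]
  abel

lemma auxG_transpose {d N : ℕ} (γ np : ℝ) {Sig : Matrix (Fin d) (Fin d) ℝ}
    {B : Fin N → Matrix (Fin d) (Fin d) ℝ} (hSigT : Sigᵀ = Sig) (hBT : ∀ i, (B i)ᵀ = B i)
    (Q : Matrix (Fin d) (Fin d) ℝ) :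
    (auxG γ np Sig B Q)ᵀ = auxG γ np Sig B Qᵀ := by
  simp only [auxG, transpose_sub, transpose_add, transpose_smul, transpose_mul,
    Matrix.transpose_sum, hSigT, hBT, Matrix.mul_assoc]
  abel

lemma auxG_zero {d N : ℕ} (γ np : ℝ) (Sig : Matrix (Fin d) (Fin d) ℝ)
    (B : Fin N → Matrix (Fin d) (Fin d) ℝ) : auxG γ np Sig B 0 = 0 := by
  simp [auxG]

/-- Comparison of the stationary covariances of SGLD and SGLDFP in Bayesian linear
regression: with `G(Q) = ΣQ + QΣ - γ(ΣQΣ + T(Q))`, `G(C_SGLD) = 2Id + γ(N/p)M` and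
`G(C_FP) = 2Id`, one has `C_SGLD ⪰ C_FP`, hence `Tr C_SGLD ≥ Tr C_FP`, with equality of
traces iff `M = 0`. -/
theorem stmt19 {d : ℕ} (N p : ℕ) (hN : 0 < N) (hp : 0 < p)
    (x : Fin N → Fin d → ℝ) (yv : Fin N → ℝ) (θs : Fin d → ℝ)
    (σy2 σp2 γ L r : ℝ) (hσy : 0 < σy2) (hσp : 0 < σp2)
    (Sig : Matrix (Fin d) (Fin d) ℝ)
    (hSigdef : Sig = (1 / σp2) • (1 : Matrix (Fin d) (Fin d) ℝ)
      + (1 / σy2) • ∑ i, vecMulVec (x i) (x i))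
    (hSig : Sig.PosDef)
    (hL : ∀ v : Fin d → ℝ, v ⬝ᵥ (Sig *ᵥ v) ≤ L * (v ⬝ᵥ v))
    (B : Fin N → Matrix (Fin d) (Fin d) ℝ)
    (hB : ∀ i, B i = (1 / σy2) • vecMulVec (x i) (x i)
      + (1 / ((N : ℝ) * σp2)) • (1 : Matrix (Fin d) (Fin d) ℝ) - ((1 : ℝ) / N) • Sig)
    -- domination of the multiplicative-noise operator: `T ⪯ r² (Σ ⊗ Σ)`
    (hr : ∀ Q : Matrix (Fin d) (Fin d) ℝ,
      (Qᵀ * (((N : ℝ) / p) • ∑ i, B i * Q * B i)).trace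
        ≤ r ^ 2 * (Qᵀ * (Sig * Q * Sig)).trace)
    (hγ : γ ∈ Set.Ioo (0 : ℝ) (2 / ((1 + r ^ 2) * L)))
    (M : Matrix (Fin d) (Fin d) ℝ)
    (hM : M = ∑ i, vecMulVec
      ((1 / σy2) • ((x i ⬝ᵥ θs - yv i) • x i) + (1 / σp2) • θs)
      ((1 / σy2) • ((x i ⬝ᵥ θs - yv i) • x i) + (1 / σp2) • θs))
    (CS CF : Matrix (Fin d) (Fin d) ℝ)
    (hCS : Sig * CS + CS * Sig
        - γ • (Sig * CS * Sig + ((N : ℝ) / p) • ∑ i, B i * CS * B i)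
      = (2 : ℝ) • 1 + (γ * (N : ℝ) / p) • M)
    (hCF : Sig * CF + CF * Sig
        - γ • (Sig * CF * Sig + ((N : ℝ) / p) • ∑ i, B i * CF * B i)
      = (2 : ℝ) • 1) :
    (CS - CF).PosSemidef ∧ 0 ≤ (CS - CF).trace ∧ (CS.trace = CF.trace ↔ M = 0) := by
  obtain ⟨hγ0, hγ2⟩ := hγ
  have hr2 : (0:ℝ) ≤ r ^ 2 := sq_nonneg r
  have hrL : 0 < (1 + r ^ 2) * L := by
    rcases div_pos_iff.mp (lt_trans hγ0 hγ2) with h | h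
    · exact h.2
    · linarith [h.1]
  have hκ : γ * ((1 + r ^ 2) * L) < 2 := by
    rw [lt_div_iff₀ hrL] at hγ2; linarith
  have hSigT : Sigᵀ = Sig := aux_symm_of_psd hSig.posSemidef
  have hBT : ∀ i, (B i)ᵀ = B i := by
    intro i
    rw [hB i]
    simp only [transpose_sub, transpose_add, transpose_smul, transpose_one, hSigT]
    congr 2
    ext a b
    simp [vecMulVec_apply, mul_comm]
  have hBH : ∀ i, (B i)ᴴ = B i := fun i => by
    rw [conjTranspose_eq_transpose_of_trivial]; exact hBT i
  have hMpsd : M.PosSemidef := by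
    rw [hM]
    refine Finset.sum_induction _ _ (fun a b ha hb => ha.add hb) ?_ ?_
    · exact Matrix.PosSemidef.zero
    · intro i _
      refine Matrix.PosSemidef.of_dotProduct_mulVec_nonneg ?_ ?_
      · rw [Matrix.IsHermitian, conjTranspose_eq_transpose_of_trivial]
        ext a b; simp [vecMulVec_apply, mul_comm]
      · intro v
        set w := (1 / σy2) • ((x i ⬝ᵥ θs - yv i) • x i) + (1 / σp2) • θs with hw
        have hmv : vecMulVec w w *ᵥ v = (w ⬝ᵥ v) • w := by
          ext a
          simp only [Matrix.mulVec, vecMulVec_apply, dotProduct, Pi.smul_apply, smul_eq_mul,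
            Finset.sum_mul]
          exact Finset.sum_congr rfl fun j _ => by ring
        rw [hmv, dotProduct_smul, smul_eq_mul]
        have : star v ⬝ᵥ w = v ⬝ᵥ w := by simp [dotProduct]
        rw [this, dotProduct_comm]
        exact mul_self_nonneg _
  have hMT : Mᵀ = M := aux_symm_of_psd hMpsd
  set np : ℝ := (N : ℝ) / p with hnp
  have hnp0 : 0 ≤ np := by positivity
  set c : ℝ := γ * (N : ℝ) / p with hcdef
  have hc0 : 0 < c := by
    apply div_pos (mul_pos hγ0 _) (Nat.cast_pos.mpr hp)
    exact_mod_cast hN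
  -- pairing expansion
  have hpair : ∀ P Q : Matrix (Fin d) (Fin d) ℝ,
      (Pᵀ * auxG γ np Sig B Q).trace
        = (Pᵀ * (Sig * Q)).trace + (Pᵀ * (Q * Sig)).trace
          - γ * ((Pᵀ * (Sig * Q * Sig)).trace + (Pᵀ * (np • ∑ i, B i * Q * B i)).trace) := by
    intro P Q
    simp only [auxG, Matrix.mul_add, Matrix.mul_sub, Matrix.mul_smul, trace_add, trace_sub,
      trace_smul, smul_eq_mul] <;> ring
  -- coercivity
  have key : ∀ Q : Matrix (Fin d) (Fin d) ℝ, Q ≠ 0 →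
      0 < (Qᵀ * auxG γ np Sig B Q).trace := by
    intro Q hQ
    have ht1 : 0 < (Qᵀ * (Sig * Q)).trace := aux_trace_quad_pos hSig hQ
    have ht2 : 0 < (Qᵀ * (Q * Sig)).trace := by
      have h0 : Qᵀ ≠ 0 := fun h => hQ (by simpa using congrArg Matrix.transpose h)
      have := aux_trace_quad_pos hSig h0
      rwa [transpose_transpose, show (Q * (Sig * Qᵀ)).trace = (Qᵀ * (Q * Sig)).trace from by
        rw [show Q * (Sig * Qᵀ) = Q * Sig * Qᵀ from by simp only [Matrix.mul_assoc],
          Matrix.trace_mul_comm, ← Matrix.mul_assoc]] at this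
    obtain ⟨hs2, hs1⟩ := aux_s_le hSig.posSemidef L hL Q
    have hτ := hr Q
    rw [hpair]
    have h1r : (0:ℝ) ≤ γ * (1 + r ^ 2) := by positivity
    nlinarith [mul_nonneg hγ0.le (sub_nonneg.mpr hτ),
      mul_nonneg h1r (sub_nonneg.mpr hs1), mul_nonneg h1r (sub_nonneg.mpr hs2),
      mul_pos (show (0:ℝ) < 2 - γ * ((1 + r ^ 2) * L) from by linarith) (add_pos ht1 ht2)]
  have hinj : ∀ Q : Matrix (Fin d) (Fin d) ℝ, auxG γ np Sig B Q = 0 → Q = 0 := by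
    intro Q h
    by_contra hne
    have := key Q hne
    rw [h, Matrix.mul_zero, trace_zero] at this
    exact lt_irrefl 0 this
  -- the equation for the difference
  set D : Matrix (Fin d) (Fin d) ℝ := CS - CF with hDdef
  have hCS' : auxG γ np Sig B CS = (2 : ℝ) • 1 + c • M := hCS
  have hCF' : auxG γ np Sig B CF = (2 : ℝ) • 1 := hCF
  have hGD : auxG γ np Sig B D = c • M := by
    rw [hDdef, auxG_sub, hCS', hCF', add_sub_cancel_left]
  -- symmetry of D
  have hDT : Dᵀ = D := by
    have h1 : auxG γ np Sig B (Dᵀ - D) = 0 := by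
      rw [auxG_sub, ← auxG_transpose γ np hSigT hBT, hGD, transpose_smul, hMT, sub_self]
    have := hinj _ h1
    rwa [sub_eq_zero] at this
  have hDh : D.IsHermitian := by
    rw [Matrix.IsHermitian, conjTranspose_eq_transpose_of_trivial, hDT]
  -- spectral decomposition, positive and negative parts
  have hspec := hDh.spectral_theorem
  rw [RCLike.ofReal_real_eq_id, Function.id_comp, Unitary.conjStarAlgAut_apply] at hspec
  set U : Matrix (Fin d) (Fin d) ℝ := (hDh.eigenvectorUnitary : Matrix (Fin d) (Fin d) ℝ)
    with hUdef
  have hUU : star U * U = 1 := Matrix.mem_unitaryGroup_iff'.mp hDh.eigenvectorUnitary.2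
  set ev : Fin d → ℝ := hDh.eigenvalues with hev
  set P : Matrix (Fin d) (Fin d) ℝ := U * diagonal (fun i => max (ev i) 0) * star U with hPdef
  set Nm : Matrix (Fin d) (Fin d) ℝ := U * diagonal (fun i => max (-ev i) 0) * star U
    with hNmdef
  have hPs : P.PosSemidef := by
    rw [hPdef, Matrix.star_eq_conjTranspose]
    exact (Matrix.PosSemidef.diagonal (fun i => le_max_right _ _)).mul_mul_conjTranspose_same U
  have hNs : Nm.PosSemidef := by
    rw [hNmdef, Matrix.star_eq_conjTranspose]
    exact (Matrix.PosSemidef.diagonal (fun i => le_max_right _ _)).mul_mul_conjTranspose_same U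
  have hdd : ∀ (f g : Fin d → ℝ), (∀ i, f i * g i = 0) →
      (diagonal f : Matrix (Fin d) (Fin d) ℝ) * diagonal g = 0 := by
    intro f g h
    rw [diagonal_mul_diagonal, show (fun i => f i * g i) = fun _ => (0:ℝ) from funext h,
      Matrix.diagonal_zero]
  have hmax : ∀ a : ℝ, max a 0 * max (-a) 0 = 0 := by
    intro a
    rcases le_total a 0 with h | h
    · rw [max_eq_right h, zero_mul]
    · rw [max_eq_right (neg_nonpos.mpr h), mul_zero]
  have hPN : P * Nm = 0 := by
    have h1 : P * Nm = U * (diagonal (fun i => max (ev i) 0) *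
        ((star U * U) * (diagonal (fun i => max (-ev i) 0) * star U))) := by
      rw [hPdef, hNmdef]; simp only [Matrix.mul_assoc]
    rw [h1, hUU, one_mul, ← Matrix.mul_assoc (diagonal _),
      hdd _ _ (fun i => hmax (ev i)), Matrix.zero_mul, Matrix.mul_zero]
  have hNP : Nm * P = 0 := by
    have h1 : Nm * P = U * (diagonal (fun i => max (-ev i) 0) *
        ((star U * U) * (diagonal (fun i => max (ev i) 0) * star U))) := by
      rw [hPdef, hNmdef]; simp only [Matrix.mul_assoc]
    rw [h1, hUU, one_mul, ← Matrix.mul_assoc (diagonal _),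
      hdd _ _ (fun i => by rw [mul_comm]; exact hmax (ev i)), Matrix.zero_mul, Matrix.mul_zero]
  have hDPN : D = P - Nm := by
    have h2 : (diagonal (fun i => max (ev i) 0) : Matrix (Fin d) (Fin d) ℝ)
        - diagonal (fun i => max (-ev i) 0) = diagonal ev := by
      rw [diagonal_sub]
      exact congrArg diagonal (funext fun i => max_zero_sub_max_neg_zero_eq_self (ev i))
    rw [hPdef, hNmdef, ← Matrix.sub_mul, ← Matrix.mul_sub, h2, ← hspec]
  have hNT : Nmᵀ = Nm := aux_symm_of_psd hNs
  -- testing against Nm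
  have hMc : 0 ≤ (Nmᵀ * (c • M)).trace := by
    rw [hNT, Matrix.mul_smul, trace_smul, smul_eq_mul]
    exact mul_nonneg hc0.le (aux_psd_trace_mul_nonneg hNs hMpsd)
  have hGP : (Nmᵀ * auxG γ np Sig B P).trace ≤ 0 := by
    rw [hpair, hNT]
    have ha1 : (Nm * (Sig * P)).trace = 0 := by
      rw [← Matrix.mul_assoc, Matrix.trace_mul_cycle, hPN, Matrix.zero_mul, trace_zero]
    have ha2 : (Nm * (P * Sig)).trace = 0 := by
      rw [← Matrix.mul_assoc, hNP, Matrix.zero_mul, trace_zero]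
    have ha3 : 0 ≤ (Nm * (Sig * P * Sig)).trace := by
      have hps : (Sig * P * Sig).PosSemidef := by
        have := hPs.mul_mul_conjTranspose_same Sig
        rwa [conjTranspose_eq_transpose_of_trivial, hSigT] at this
      exact aux_psd_trace_mul_nonneg hNs hps
    have ha4 : 0 ≤ (Nm * (np • ∑ i, B i * P * B i)).trace := by
      rw [Matrix.mul_smul, trace_smul, smul_eq_mul]
      refine mul_nonneg hnp0 ?_
      rw [Matrix.mul_sum, trace_sum]
      refine Finset.sum_nonneg fun i _ => ?_
      have hps : (B i * P * B i).PosSemidef := by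
        have := hPs.mul_mul_conjTranspose_same (B i)
        rwa [hBH i] at this
      exact aux_psd_trace_mul_nonneg hNs hps
    rw [ha1, ha2]
    nlinarith [mul_nonneg hγ0.le (add_nonneg ha3 ha4)]
  have hNm0 : Nm = 0 := by
    by_contra hne
    have h5 := key Nm hne
    have h6 : (Nmᵀ * auxG γ np Sig B D).trace
        = (Nmᵀ * auxG γ np Sig B P).trace - (Nmᵀ * auxG γ np Sig B Nm).trace := by
      rw [hDPN, auxG_sub, Matrix.mul_sub, trace_sub]
    rw [hGD] at h6
    linarith
  have hDpsd : D.PosSemidef := by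
    rw [hDPN, hNm0, sub_zero]
    exact hPs
  refine ⟨hDpsd, aux_psd_trace_nonneg hDpsd, ?_, ?_⟩
  · intro hEq
    have hDtr : D.trace = 0 := by rw [hDdef, trace_sub, hEq, sub_self]
    have hD0 : D = 0 := aux_psd_trace_eq_zero hDpsd hDtr
    have h7 : c • M = 0 := by rw [← hGD, hD0, auxG_zero]
    rcases smul_eq_zero.mp h7 with h | h
    · exact absurd h (ne_of_gt hc0)
    · exact h
  · intro hM0
    have hD0 : D = 0 := by
      apply hinj
      rw [hGD, hM0, smul_zero]
    have : CS = CF := by rwa [hDdef, sub_eq_zero] at hD0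
    rw [this]
end
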